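/- arXiv:0910.1645 — 7 statements merged into one kernel-verified Lean document; each statement's English description precedes it below -/
import Mathlib

section
/- Let S_0, …, S_8 be a Cl⁺(9)-system on ℝ^16. Then the product S_0S_1···S_8 equals id or −id. -/
abbrev E16 := EuclideanSpace ℝ (Fin 16)

namespace Stmt5Aux

variable (S : Fin 9 → (E16 →ₗ[ℝ] E16))

/-- ordered product of the `S i` over a finset -/
noncomputable def G (A : Finset (Fin 9)) : E16 →ₗ[ℝ] E16 :=
  (((List.finRange 9).filter (fun i => decide (i ∈ A))).map S).prod

variable (h1 : ∀ i, S i * S i = 1) (h2 : ∀ i j, i ≠ j → S i * S j = -(S j * S i))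

include h2 in
lemma move (l : List (Fin 9)) (j : Fin 9) (hj : j ∉ l) :
    S j * (l.map S).prod = (-1:ℝ)^l.length • ((l.map S).prod * S j) := by
  induction l with
  | nil => simp
  | cons a t ih =>
    have hja : j ≠ a := fun h => hj (h ▸ List.mem_cons_self (a := a) (l := t))
    have hjt : j ∉ t := fun h => hj (List.mem_cons_of_mem a h)
    simp only [List.map_cons, List.prod_cons, List.length_cons]
    rw [← mul_assoc, h2 j a hja, neg_mul, mul_assoc, ih hjt]
    rw [mul_smul_comm, mul_assoc, pow_succ, mul_neg_one, neg_smul]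

lemma G_empty : G S ∅ = 1 := by simp [G]

lemma nodup_filt (A : Finset (Fin 9)) :
    ((List.finRange 9).filter (fun i => decide (i ∈ A))).Nodup :=
  (List.nodup_finRange 9).filter _

lemma toFinset_filt (A : Finset (Fin 9)) :
    ((List.finRange 9).filter (fun i => decide (i ∈ A))).toFinset = A := by
  ext i; simp

lemma length_filt (A : Finset (Fin 9)) :
    ((List.finRange 9).filter (fun i => decide (i ∈ A))).length = A.card := by
  rw [← List.toFinset_card_of_nodup (nodup_filt A), toFinset_filt]

lemma exists_split (j : Fin 9) : ∃ u v : List (Fin 9),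
    List.finRange 9 = u ++ j :: v ∧ j ∉ u ∧ j ∉ v := by
  obtain ⟨u, v, h⟩ := List.append_of_mem (List.mem_finRange j)
  have hnd : (u ++ j :: v).Nodup := h ▸ List.nodup_finRange 9
  rw [List.nodup_append] at hnd
  obtain ⟨-, hnd2, hdisj⟩ := hnd
  refine ⟨u, v, h, fun hju => ?_, (List.nodup_cons.mp hnd2).1⟩
  exact hdisj j hju j (List.mem_cons_self (a := j) (l := v)) rfl

lemma filter_congr_ne (u : List (Fin 9)) (j : Fin 9) (hj : j ∉ u)
    (A B : Finset (Fin 9)) (hAB : ∀ x : Fin 9, x ≠ j → (x ∈ A ↔ x ∈ B)) :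
    u.filter (fun i => decide (i ∈ A)) = u.filter (fun i => decide (i ∈ B)) := by
  apply List.filter_congr
  intro x hx
  have hxj : x ≠ j := fun h => hj (h ▸ hx)
  simp [hAB x hxj]

lemma G_split_mem (A : Finset (Fin 9)) (j : Fin 9) (hj : j ∈ A)
    (u v : List (Fin 9)) (h : List.finRange 9 = u ++ j :: v) :
    G S A = ((u.filter (fun i => decide (i ∈ A))).map S).prod *
      (S j * ((v.filter (fun i => decide (i ∈ A))).map S).prod) := by
  rw [G, h, List.filter_append, List.filter_cons]
  simp [hj]

lemma G_split_notmem (A : Finset (Fin 9)) (j : Fin 9) (hj : j ∉ A)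
    (u v : List (Fin 9)) (h : List.finRange 9 = u ++ j :: v) :
    G S A = ((u.filter (fun i => decide (i ∈ A))).map S).prod *
      ((v.filter (fun i => decide (i ∈ A))).map S).prod := by
  rw [G, h, List.filter_append, List.filter_cons]
  simp [hj]

include h1 h2 in
lemma prepend_mem (A : Finset (Fin 9)) (j : Fin 9) (hj : j ∈ A) :
    ∃ ε : ℝ, ε * ε = 1 ∧ S j * G S A = ε • G S (A.erase j) := by
  obtain ⟨u, v, h, hju, hjv⟩ := exists_split j
  set pu := u.filter (fun i => decide (i ∈ A)) with hpu
  set pv := v.filter (fun i => decide (i ∈ A)) with hpv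
  have hU : G S A = (pu.map S).prod * (S j * (pv.map S).prod) := G_split_mem S A j hj u v h
  have herase : G S (A.erase j) = (pu.map S).prod * (pv.map S).prod := by
    rw [G_split_notmem S (A.erase j) j (by simp) u v h,
        filter_congr_ne u j hju (A.erase j) A (fun x hx => by simp [Finset.mem_erase, hx]),
        filter_congr_ne v j hjv (A.erase j) A (fun x hx => by simp [Finset.mem_erase, hx])]
  have hjpu : j ∉ pu := fun hmem => hju (List.mem_of_mem_filter hmem)
  refine ⟨(-1:ℝ)^pu.length, ?_, ?_⟩
  · rw [← pow_add]; exact Even.neg_one_pow ⟨pu.length, rfl⟩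
  · rw [hU, herase, ← mul_assoc, move S h2 pu j hjpu, smul_mul_assoc]
    congr 1
    rw [mul_assoc, ← mul_assoc (S j), h1 j, one_mul]

include h1 h2 in
lemma prepend_notmem (A : Finset (Fin 9)) (j : Fin 9) (hj : j ∉ A) :
    ∃ ε : ℝ, ε * ε = 1 ∧ S j * G S A = ε • G S (insert j A) := by
  obtain ⟨u, v, h, hju, hjv⟩ := exists_split j
  set pu := u.filter (fun i => decide (i ∈ A)) with hpu
  set pv := v.filter (fun i => decide (i ∈ A)) with hpv
  have hU : G S A = (pu.map S).prod * (pv.map S).prod := G_split_notmem S A j hj u v h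
  have hins : G S (insert j A) = (pu.map S).prod * (S j * (pv.map S).prod) := by
    rw [G_split_mem S (insert j A) j (Finset.mem_insert_self j A) u v h,
        filter_congr_ne u j hju (insert j A) A (fun x hx => by simp [Finset.mem_insert, hx]),
        filter_congr_ne v j hjv (insert j A) A (fun x hx => by simp [Finset.mem_insert, hx])]
  have hjpu : j ∉ pu := fun hmem => hju (List.mem_of_mem_filter hmem)
  refine ⟨(-1:ℝ)^pu.length, ?_, ?_⟩
  · rw [← pow_add]; exact Even.neg_one_pow ⟨pu.length, rfl⟩
  · rw [hU, hins, ← mul_assoc, move S h2 pu j hjpu, smul_mul_assoc, mul_assoc]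

include h2 in
lemma L_notmem (A : Finset (Fin 9)) (j : Fin 9) (hj : j ∉ A) :
    S j * G S A = (-1:ℝ)^(A.card) • (G S A * S j) := by
  have hjl : j ∉ (List.finRange 9).filter (fun i => decide (i ∈ A)) :=
    fun hmem => hj (by simpa using List.of_mem_filter hmem)
  rw [G, ← length_filt A]
  exact move S h2 _ j hjl

include h1 h2 in
lemma L_mem (A : Finset (Fin 9)) (i : Fin 9) (hi : i ∈ A) :
    S i * G S A = (-1:ℝ)^(A.card - 1) • (G S A * S i) := by
  obtain ⟨u, v, h, hju, hjv⟩ := exists_split i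
  set pu := u.filter (fun x => decide (x ∈ A)) with hpu
  set pv := v.filter (fun x => decide (x ∈ A)) with hpv
  have hU : G S A = (pu.map S).prod * (S i * (pv.map S).prod) := G_split_mem S A i hi u v h
  have hipu : i ∉ pu := fun hmem => hju (List.mem_of_mem_filter hmem)
  have hipv : i ∉ pv := fun hmem => hjv (List.mem_of_mem_filter hmem)
  have hlen : pu.length + 1 + pv.length = A.card := by
    have hl := length_filt A
    rw [h, List.filter_append, List.filter_cons] at hl
    simp [hi] at hl
    rw [← hpu, ← hpv] at hl
    omega
  have e1 : S i * G S A = (-1:ℝ)^pu.length • ((pu.map S).prod * (pv.map S).prod) := by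
    rw [hU, ← mul_assoc, move S h2 pu i hipu, smul_mul_assoc]
    congr 1
    rw [mul_assoc, ← mul_assoc (S i), h1 i, one_mul]
  have e2 : G S A * S i = (-1:ℝ)^pv.length • ((pu.map S).prod * (pv.map S).prod) := by
    have hmv : (pv.map S).prod * S i = (-1:ℝ)^pv.length • (S i * (pv.map S).prod) := by
      have := move S h2 pv i hipv
      rw [this, smul_smul, ← pow_add, Even.neg_one_pow ⟨pv.length, rfl⟩, one_smul]
    rw [hU, mul_assoc, mul_assoc, hmv, mul_smul_comm, mul_smul_comm]
    congr 1
    rw [← mul_assoc (S i) (S i), h1 i, one_mul]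
  rw [e1, e2, smul_smul, ← pow_add]
  congr 1
  have hx : A.card - 1 + pv.length = pu.length + (pv.length + pv.length) := by omega
  rw [hx, pow_add, Even.neg_one_pow ⟨pv.length, rfl⟩, mul_one]

include h1 h2 in
lemma trace_G_ne (C : Finset (Fin 9)) (hne : C.Nonempty) (hnu : C ≠ Finset.univ) :
    LinearMap.trace ℝ E16 (G S C) = 0 := by
  have hex : ∃ k : Fin 9, S k * G S C = -(G S C * S k) := by
    rcases Nat.even_or_odd C.card with he | ho
    · obtain ⟨i, hi⟩ := hne
      refine ⟨i, ?_⟩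
      have hcp : 1 ≤ C.card := Finset.card_pos.mpr ⟨i, hi⟩
      obtain ⟨m, hm⟩ := he
      have hodd : Odd (C.card - 1) := ⟨m - 1, by omega⟩
      rw [L_mem S h1 h2 C i hi, Odd.neg_one_pow hodd, neg_one_smul]
    · obtain ⟨j, hj⟩ : ∃ j, j ∉ C := by
        by_contra hc; push_neg at hc; exact hnu (Finset.eq_univ_iff_forall.mpr hc)
      refine ⟨j, ?_⟩
      rw [L_notmem S h2 C j hj, Odd.neg_one_pow ho, neg_one_smul]
  obtain ⟨k, hk⟩ := hex
  have e : G S C = -(S k * (G S C * S k)) := by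
    have h' : S k * (S k * G S C) = G S C := by rw [← mul_assoc, h1 k, one_mul]
    conv_lhs => rw [← h']
    rw [hk, mul_neg]
  have := congrArg (LinearMap.trace ℝ E16) e
  rw [map_neg, LinearMap.trace_mul_comm, mul_assoc, h1 k, mul_one] at this
  linarith

lemma symm_insert (F B : Finset (Fin 9)) (j : Fin 9) (hj : j ∉ F) :
    symmDiff (insert j F) B =
      if j ∈ symmDiff F B then (symmDiff F B).erase j else insert j (symmDiff F B) := by
  by_cases hjB : j ∈ B <;>
    · ext x
      by_cases hx : x = j <;> simp [Finset.mem_symmDiff, *] <;> tauto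

include h1 h2 in
lemma prodl (l : List (Fin 9)) (hnd : l.Nodup) (B : Finset (Fin 9)) :
    ∃ ε : ℝ, ε * ε = 1 ∧ (l.map S).prod * G S B = ε • G S (symmDiff l.toFinset B) := by
  induction l generalizing B with
  | nil =>
    refine ⟨1, by norm_num, ?_⟩
    have : symmDiff ([] : List (Fin 9)).toFinset B = B := by
      rw [List.toFinset_nil, ← Finset.bot_eq_empty, bot_symmDiff]
    rw [this]; simp
  | cons j t ih =>
    obtain ⟨hjt, hndt⟩ := List.nodup_cons.mp hnd
    obtain ⟨ε, hε, hIH⟩ := ih hndt B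
    have hstep : ((j :: t).map S).prod * G S B = S j * ((t.map S).prod * G S B) := by
      simp [List.prod_cons, mul_assoc]
    have htf : (j :: t).toFinset = insert j t.toFinset := by simp
    have hjtf : j ∉ t.toFinset := by simpa using hjt
    by_cases hjC : j ∈ symmDiff t.toFinset B
    · obtain ⟨ε', hε', hpre⟩ := prepend_mem S h1 h2 _ j hjC
      refine ⟨ε * ε', by rw [mul_mul_mul_comm, hε, hε', one_mul], ?_⟩
      rw [hstep, hIH, mul_smul_comm, hpre, htf, symm_insert _ B j hjtf, if_pos hjC,
        smul_smul]
    · obtain ⟨ε', hε', hpre⟩ := prepend_notmem S h1 h2 _ j hjC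
      refine ⟨ε * ε', by rw [mul_mul_mul_comm, hε, hε', one_mul], ?_⟩
      rw [hstep, hIH, mul_smul_comm, hpre, htf, symm_insert _ B j hjtf, if_neg hjC,
        smul_smul]

include h1 h2 in
lemma Gmul (A B : Finset (Fin 9)) :
    ∃ ε : ℝ, ε * ε = 1 ∧ G S A * G S B = ε • G S (symmDiff A B) := by
  obtain ⟨ε, hε, hl⟩ := prodl S h1 h2 _ (nodup_filt A) B
  rw [toFinset_filt] at hl
  exact ⟨ε, hε, hl⟩

end Stmt5Aux


section final
open Stmt5Aux

/-- For a `Cl⁺(9)`-system `S₀,…,S₈` on `ℝ¹⁶`, the product `S₀S₁⋯S₈` is `id` or `−id`. -/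
theorem stmt5 (S : Fin 9 → (E16 →ₗ[ℝ] E16))
    (hsymm : ∀ i, LinearMap.adjoint (S i) = S i)
    (hcl : ∀ i j, S i * S j + S j * S i =
      if i = j then (2 : ℝ) • (1 : E16 →ₗ[ℝ] E16) else 0) :
    ((List.finRange 9).map S).prod = 1 ∨ ((List.finRange 9).map S).prod = -1 := by
  classical
  have h1 : ∀ i, S i * S i = 1 := by
    intro i
    have h := hcl i i
    rw [if_pos rfl] at h
    have h2 : (2:ℝ) • (S i * S i) = (2:ℝ) • (1 : E16 →ₗ[ℝ] E16) := by
      rw [two_smul]; exact h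
    exact smul_right_injective _ two_ne_zero h2
  have h2 : ∀ i j, i ≠ j → S i * S j = -(S j * S i) := by
    intro i j hij
    have h := hcl i j
    rw [if_neg hij] at h
    exact eq_neg_of_add_eq_zero_left h
  set tr := LinearMap.trace ℝ E16 with htr
  set f : Finset (Fin 8) → Finset (Fin 9) := fun B => insert 0 (B.image Fin.succ) with hf
  have hf0 : ∀ B, (0 : Fin 9) ∈ f B := fun B => Finset.mem_insert_self _ _
  have hfinj : Function.Injective f := by
    have key : ∀ (C : Finset (Fin 8)) (x : Fin 8), x ∈ C ↔ Fin.succ x ∈ f C := by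
      intro C x
      constructor
      · intro hx
        exact Finset.mem_insert_of_mem (Finset.mem_image.mpr ⟨x, hx, rfl⟩)
      · intro hx
        rcases Finset.mem_insert.mp hx with h | h
        · exact absurd h (Fin.succ_ne_zero x)
        · obtain ⟨y, hy, hyx⟩ := Finset.mem_image.mp h
          rwa [← Fin.succ_injective 8 hyx]
    intro B B' hBB
    ext x
    rw [key B x, key B' x, hBB]
  have hfuniv : f Finset.univ = Finset.univ := by
    apply Finset.eq_univ_iff_forall.mpr
    intro x
    rcases eq_or_ne x 0 with h | h
    · rw [h]; exact hf0 _
    · obtain ⟨y, hy⟩ := Fin.exists_succ_eq.mpr h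
      exact Finset.mem_insert_of_mem (Finset.mem_image.mpr ⟨y, Finset.mem_univ y, hy⟩)
  have hfne : ∀ B, (f B).Nonempty := fun B => ⟨0, hf0 B⟩
  have hfnu : ∀ B, B ≠ Finset.univ → f B ≠ Finset.univ := by
    intro B hB hcon
    exact hB (hfinj (hcon.trans hfuniv.symm))
  set v : Finset (Fin 8) → (E16 →ₗ[ℝ] E16) := fun B => G S (f B) with hv
  have hdiag : ∀ B, ∃ ε : ℝ, ε * ε = 1 ∧ tr (v B * v B) = ε * 16 := by
    intro B
    obtain ⟨ε, hε, hm⟩ := Gmul S h1 h2 (f B) (f B)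
    rw [symmDiff_self, Finset.bot_eq_empty, G_empty] at hm
    refine ⟨ε, hε, ?_⟩
    rw [hv]
    simp only [hm, map_smul, smul_eq_mul]
    rw [htr, LinearMap.trace_one]
    norm_num
  have hoff : ∀ B B', B ≠ B' → tr (v B * v B') = 0 := by
    intro B B' hne
    obtain ⟨ε, hε, hm⟩ := Gmul S h1 h2 (f B) (f B')
    have hsne : (symmDiff (f B) (f B')).Nonempty := by
      rw [Finset.nonempty_iff_ne_empty, ← Finset.bot_eq_empty]
      intro hcon
      exact hne (hfinj (symmDiff_eq_bot.mp hcon))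
    have hsnu : symmDiff (f B) (f B') ≠ Finset.univ := by
      intro hcon
      have : (0 : Fin 9) ∈ symmDiff (f B) (f B') := hcon ▸ Finset.mem_univ 0
      rw [Finset.mem_symmDiff] at this
      rcases this with ⟨_, hn⟩ | ⟨_, hn⟩
      · exact hn (hf0 B')
      · exact hn (hf0 B)
    rw [hv]
    simp only [hm, map_smul, smul_eq_mul]
    rw [htr, trace_G_ne S h1 h2 _ hsne hsnu, mul_zero]
  have hsum : ∀ (g : Finset (Fin 8) → ℝ) (B : Finset (Fin 8)),
      tr ((∑ i, g i • v i) * v B) = ∑ i, g i * tr (v i * v B) := by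
    intro g B
    rw [Finset.sum_mul, map_sum]
    apply Finset.sum_congr rfl
    intro i _
    rw [smul_mul_assoc, map_smul, smul_eq_mul]
  have hli : LinearIndependent ℝ v := by
    rw [Fintype.linearIndependent_iff]
    intro g hg B
    have happ : tr ((∑ i, g i • v i) * v B) = 0 := by
      rw [hg, zero_mul, map_zero]
    rw [hsum g B, Finset.sum_eq_single B
      (fun i _ hiB => by rw [hoff i B hiB, mul_zero])
      (fun h => absurd (Finset.mem_univ B) h)] at happ
    obtain ⟨ε, hε, hd⟩ := hdiag B
    rw [hd] at happ
    have hε0 : ε ≠ 0 := by intro h0; rw [h0] at hε; norm_num at hε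
    rcases mul_eq_zero.mp happ with h | h
    · exact h
    · exact absurd h (mul_ne_zero hε0 (by norm_num))
  have hcard : Fintype.card (Finset (Fin 8)) = Module.finrank ℝ (E16 →ₗ[ℝ] E16) := by
    rw [Module.finrank_linearMap, Fintype.card_finset]
    simp
  let b := basisOfLinearIndependentOfCardEqFinrank hli hcard
  have hb : ⇑b = v := coe_basisOfLinearIndependentOfCardEqFinrank hli hcard
  set c := b.repr 1 with hc
  have hrepr : ∑ B, c B • v B = 1 := by
    have hh := b.sum_repr 1
    simp only [hb] at hh
    exact hh
  have hzero : ∀ B, B ≠ Finset.univ → c B = 0 := by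
    intro B hB
    have happ : tr ((∑ i, c i • v i) * v B) = 0 := by
      rw [hrepr, one_mul, hv]
      simp only []
      rw [htr]
      exact trace_G_ne S h1 h2 (f B) (hfne B) (hfnu B hB)
    rw [hsum c B, Finset.sum_eq_single B
      (fun i _ hiB => by rw [hoff i B hiB, mul_zero])
      (fun h => absurd (Finset.mem_univ B) h)] at happ
    obtain ⟨ε, hε, hd⟩ := hdiag B
    rw [hd] at happ
    have hε0 : ε ≠ 0 := by intro h0; rw [h0] at hε; norm_num at hε
    rcases mul_eq_zero.mp happ with h | h
    · exact h
    · exact absurd h (mul_ne_zero hε0 (by norm_num))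
  set P := ((List.finRange 9).map S).prod with hPdef
  have hGP : G S Finset.univ = P := by
    have hfe : (List.finRange 9).filter (fun i => decide (i ∈ (Finset.univ : Finset (Fin 9)))) =
        List.finRange 9 := List.filter_eq_self.mpr (fun a _ => by simp)
    rw [G, hPdef, hfe]
  have hP : (1 : E16 →ₗ[ℝ] E16) = c Finset.univ • P := by
    rw [← hrepr, Finset.sum_eq_single Finset.univ
      (fun i _ hiu => by rw [hzero i hiu, zero_smul])
      (fun h => absurd (Finset.mem_univ _) h)]
    rw [hv]
    simp only []
    rw [hfuniv, hGP]
  obtain ⟨ε, hε, hPP⟩ := Gmul S h1 h2 Finset.univ Finset.univ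
  rw [symmDiff_self, Finset.bot_eq_empty, G_empty, hGP] at hPP
  set t := c Finset.univ * ε with ht
  have hPt : P = t • 1 := by
    calc P = P * 1 := (mul_one P).symm
    _ = P * (c Finset.univ • P) := by rw [← hP]
    _ = c Finset.univ • (P * P) := by rw [mul_smul_comm]
    _ = c Finset.univ • (ε • (1 : E16 →ₗ[ℝ] E16)) := by rw [hPP]
    _ = t • 1 := by rw [smul_smul]
  have hone_ne : (1 : E16 →ₗ[ℝ] E16) ≠ 0 := by
    intro hcon
    have h0 := congrArg (fun φ : E16 →ₗ[ℝ] E16 => φ (EuclideanSpace.single 0 1) (0 : Fin 16)) hcon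
    simp only [Module.End.one_apply, LinearMap.zero_apply] at h0
    rw [EuclideanSpace.single_apply] at h0
    norm_num at h0
  have htt : t * t = ε := by
    have hPP' : (t * t) • (1 : E16 →ₗ[ℝ] E16) = ε • 1 := by
      rw [← hPP, hPt, smul_mul_assoc, mul_smul_comm, one_mul, smul_smul]
    exact smul_left_injective ℝ hone_ne hPP'
  have hε1 : ε = 1 := by
    rcases mul_self_eq_one_iff.mp hε with h | h
    · exact h
    · exfalso
      rw [h] at htt
      linarith [mul_self_nonneg t]
  rw [hε1] at htt
  rcases mul_self_eq_one_iff.mp htt with h | h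
  · left; rw [hPt, h, one_smul]
  · right; rw [hPt, h, neg_smul, one_smul]

end final
end

section
/- Let S_0, …, S_8 be a Cl⁺(9)-system on ℝ^16. Then: (i) L_{9−k} = L_k for 0 ≤ k ≤ 9; (ii) the operators (1/4)·S_{i_1}···S_{i_k}, taken over all 0 ≤ k ≤ 4 and all i_1 < ··· < i_k, form an orthonormal basis of End(ℝ^16) with respect to the trace inner product, so End(ℝ^16) = L_0 ⊕ L_1 ⊕ L_2 ⊕ L_3 ⊕ L_4 (orthogonal direct sum); (iii) the space Sym(ℝ^16) of symmetric endomorphisms equals L_0 ⊕ L_1 ⊕ L_4 and the space Skew(ℝ^16) of skew-symmetric endomorphisms equals L_2 ⊕ L_3, both orthogonal direct sums. -/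
section aux
variable (S : Fin 9 → (E16 →ₗ[ℝ] E16))
  (hsymm : ∀ i, LinearMap.adjoint (S i) = S i)
  (hcl : ∀ i j, S i * S j + S j * S i = if i = j then (2:ℝ) • (1 : E16 →ₗ[ℝ] E16) else 0)

include hcl

lemma sq_one (i : Fin 9) : S i * S i = 1 := by
  have h := hcl i i
  rw [if_pos rfl] at h
  have h2 : (2:ℝ) • (S i * S i) = (2:ℝ) • (1 : E16 →ₗ[ℝ] E16) := by
    rw [two_smul]; exact h
  exact smul_right_injective _ two_ne_zero h2

lemma swap_neg {i j : Fin 9} (hij : i ≠ j) : S i * S j = -(S j * S i) := by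
  have h := hcl i j
  rw [if_neg hij] at h
  exact eq_neg_of_add_eq_zero_left h

omit hcl
include hsymm

lemma adj_prod (l : List (Fin 9)) :
    LinearMap.adjoint ((l.map S).prod) = (l.reverse.map S).prod := by
  induction l with
  | nil => simp [← LinearMap.star_eq_adjoint]
  | cons a t ih =>
    simp only [List.map_cons, List.prod_cons, List.reverse_cons, List.map_append,
      List.prod_append, List.map_cons, List.map_nil, List.prod_cons, List.prod_nil, mul_one]
    rw [← LinearMap.star_eq_adjoint, star_mul, LinearMap.star_eq_adjoint,
      LinearMap.star_eq_adjoint, hsymm, ih]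

omit hsymm
include hcl

lemma cancel_rev (l : List (Fin 9)) :
    (l.map S).prod * (l.reverse.map S).prod = 1 := by
  induction l with
  | nil => simp
  | cons a t ih =>
    simp only [List.map_cons, List.prod_cons, List.reverse_cons, List.map_append,
      List.prod_append, List.map_cons, List.map_nil, List.prod_cons, List.prod_nil, mul_one]
    calc S a * (t.map S).prod * ((t.reverse.map S).prod * S a)
        = S a * ((t.map S).prod * (t.reverse.map S).prod) * S a := by
          simp [mul_assoc]
      _ = 1 := by rw [ih, mul_one, sq_one S hcl]

lemma comm_right (l : List (Fin 9)) (j : Fin 9) :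
    (l.map S).prod * S j
      = ((-1:ℝ) ^ (l.countP (· ≠ j))) • (S j * (l.map S).prod) := by
  induction l with
  | nil => simp
  | cons a t ih =>
    simp only [List.map_cons, List.prod_cons, List.countP_cons, mul_assoc, ih,
      mul_smul_comm]
    by_cases haj : a = j
    · subst haj
      simp
    · have h1 : (decide (a ≠ j)) = true := by simp [haj]
      rw [h1]
      simp only [if_pos rfl, pow_succ, cond_true]
      have h2 : S a * (S j * (t.map S).prod) = -(S j * (S a * (t.map S).prod)) := by
        rw [← mul_assoc, swap_neg S hcl haj]
        simp [mul_assoc]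
      rw [h2, if_pos trivial, pow_succ]
      simp [smul_smul]

lemma trace_zero_of_odd (l : List (Fin 9)) (j : Fin 9)
    (hodd : Odd (l.countP (· ≠ j))) :
    LinearMap.trace ℝ E16 ((l.map S).prod) = 0 := by
  have h1 : (l.map S).prod * S j = -(S j * (l.map S).prod) := by
    rw [comm_right S hcl, Odd.neg_one_pow hodd, neg_one_smul]
  have e1 : LinearMap.trace ℝ E16 (S j * ((l.map S).prod * S j))
      = LinearMap.trace ℝ E16 ((l.map S).prod) := by
    rw [LinearMap.trace_mul_comm, mul_assoc, sq_one S hcl, mul_one]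
  have e2 : LinearMap.trace ℝ E16 (S j * ((l.map S).prod * S j))
      = - LinearMap.trace ℝ E16 ((l.map S).prod) := by
    rw [h1, mul_neg, ← mul_assoc, sq_one S hcl, one_mul, map_neg]
  linarith

omit hcl in
lemma countP_ne_add_count (l : List (Fin 9)) (j : Fin 9) :
    l.countP (· ≠ j) + l.count j = l.length := by
  induction l with
  | nil => simp
  | cons a t ih =>
    by_cases h : a = j <;> simp [List.countP_cons, List.count_cons, h, ← ih] <;> omega

omit hcl

lemma sorted_eq_of_mem_iff {l₁ l₂ : List (Fin 9)} (h₁ : l₁.Pairwise (· < ·))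
    (h₂ : l₂.Pairwise (· < ·)) (h : ∀ j, j ∈ l₁ ↔ j ∈ l₂) : l₁ = l₂ := by
  have n₁ := h₁.nodup
  have n₂ := h₂.nodup
  have hp : List.Perm l₁ l₂ := List.perm_of_nodup_nodup_toFinset_eq n₁ n₂ (by
    ext j; simp [List.mem_toFinset, h j])
  exact List.Perm.eq_of_pairwise' (h₁.imp le_of_lt) (h₂.imp le_of_lt) hp

include hcl

lemma trace_prod_eq (l₁ l₂ : List (Fin 9)) (h₁ : l₁.Pairwise (· < ·))
    (h₂ : l₂.Pairwise (· < ·)) (hl₁ : l₁.length ≤ 4) (hl₂ : l₂.length ≤ 4) :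
    LinearMap.trace ℝ E16 ((l₁.map S).prod * (l₂.reverse.map S).prod)
      = if l₁ = l₂ then 16 else 0 := by
  by_cases he : l₁ = l₂
  · subst he
    rw [if_pos rfl, cancel_rev S hcl, LinearMap.trace_one]
    norm_num [finrank_euclideanSpace_fin]
  · rw [if_neg he]
    have hm : (l₁.map S).prod * (l₂.reverse.map S).prod
        = ((l₁ ++ l₂.reverse).map S).prod := by
      rw [List.map_append, List.prod_append]
    rw [hm]
    set m := l₁ ++ l₂.reverse with hmdef
    -- find j with Odd (m.countP (· ≠ j))
    have hlen : m.length = l₁.length + l₂.length := by simp [hmdef]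
    have hcount : ∀ j, m.count j = l₁.count j + l₂.count j := by
      intro j; simp [hmdef, List.count_append]
    obtain ⟨j, hj⟩ : ∃ j, Odd (m.countP (· ≠ j)) := by
      have hcnt : ∀ j, m.countP (· ≠ j) + m.count j = m.length :=
        fun j => countP_ne_add_count m j
      rcases Nat.even_or_odd (l₁.length + l₂.length) with hev | hod
      · -- symmetric difference nonempty
        have : ∃ j, (j ∈ l₁ ∧ j ∉ l₂) ∨ (j ∈ l₂ ∧ j ∉ l₁) := by
          by_contra hc
          push_neg at hc
          exact he (sorted_eq_of_mem_iff h₁ h₂ (fun j => by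
            have := hc j; tauto))
        obtain ⟨j, hj⟩ := this
        have hcj : m.count j = 1 := by
          rcases hj with ⟨h1, h2⟩ | ⟨h1, h2⟩
          · rw [hcount, List.count_eq_one_of_mem h₁.nodup h1,
              List.count_eq_zero_of_not_mem h2]
          · rw [hcount, List.count_eq_zero_of_not_mem h2,
              List.count_eq_one_of_mem h₂.nodup h1]
        refine ⟨j, ?_⟩
        have := hcnt j
        rw [hcj, hlen] at this
        rcases hev with ⟨c, hc⟩
        exact ⟨c - 1, by omega⟩
      · -- find missing index
        have : ∃ j : Fin 9, j ∉ l₁ ∧ j ∉ l₂ := by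
          by_contra hc
          push_neg at hc
          have hsub : (Finset.univ : Finset (Fin 9)) ⊆ l₁.toFinset ∪ l₂.toFinset := by
            intro j _
            rcases Classical.em (j ∈ l₁) with h | h
            · exact Finset.mem_union_left _ (List.mem_toFinset.2 h)
            · exact Finset.mem_union_right _ (List.mem_toFinset.2 (hc j h))
          have h9 : (9 : ℕ) ≤ (l₁.toFinset ∪ l₂.toFinset).card := by
            have := Finset.card_le_card hsub
            simpa using this
          have h8 : (l₁.toFinset ∪ l₂.toFinset).card ≤ 8 := by
            calc (l₁.toFinset ∪ l₂.toFinset).card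
                ≤ l₁.toFinset.card + l₂.toFinset.card := Finset.card_union_le _ _
              _ ≤ l₁.length + l₂.length := by
                  gcongr <;> exact List.toFinset_card_le _
              _ ≤ 8 := by omega
          omega
        obtain ⟨j, hj1, hj2⟩ := this
        refine ⟨j, ?_⟩
        have hcj : m.count j = 0 := by
          rw [hcount, List.count_eq_zero_of_not_mem hj1,
            List.count_eq_zero_of_not_mem hj2]
        have := hcnt j
        rw [hcj, hlen] at this
        rcases hod with ⟨c, hc⟩
        exact ⟨c, by omega⟩
    exact trace_zero_of_odd S hcl m j hj

lemma orderedInsert_eps (a : Fin 9) (t : List (Fin 9)) :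
    ∃ ε : ℝ, (ε = 1 ∨ ε = -1) ∧
      ((List.orderedInsert (· ≤ ·) a t).map S).prod = ε • ((a :: t).map S).prod := by
  induction t with
  | nil => exact ⟨1, Or.inl rfl, by simp⟩
  | cons b t ih =>
    by_cases hab : a ≤ b
    · exact ⟨1, Or.inl rfl, by simp [List.orderedInsert, hab]⟩
    · obtain ⟨ε, hε, heq⟩ := ih
      refine ⟨-ε, by rcases hε with h|h <;> simp [h], ?_⟩
      have hba : a ≠ b := fun h => hab (le_of_eq h)
      simp only [List.orderedInsert, if_neg hab, List.map_cons, List.prod_cons, heq,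
        mul_smul_comm]
      have h2 : S b * (S a * ((t.map S).prod)) = -(S a * (S b * ((t.map S).prod))) := by
        rw [← mul_assoc, swap_neg S hcl (Ne.symm hba), neg_mul, mul_assoc]
      rw [h2, smul_neg, neg_smul]

lemma sort_eps (l : List (Fin 9)) :
    ∃ ε : ℝ, (ε = 1 ∨ ε = -1) ∧
      ((l.insertionSort (· ≤ ·)).map S).prod = ε • ((l.map S).prod) := by
  induction l with
  | nil => exact ⟨1, Or.inl rfl, by simp⟩
  | cons a t ih =>
    obtain ⟨ε, hε, heq⟩ := ih
    obtain ⟨ε', hε', heq'⟩ := orderedInsert_eps S hcl a (t.insertionSort (· ≤ ·))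
    refine ⟨ε' * ε, by rcases hε with h|h <;> rcases hε' with h'|h' <;> simp [h, h'], ?_⟩
    rw [List.insertionSort_cons, heq']
    simp only [List.map_cons, List.prod_cons, heq, mul_smul_comm, smul_smul]

lemma rev_sign (l : List (Fin 9)) (hnd : l.Nodup) :
    (l.reverse.map S).prod = ((-1:ℝ) ^ (l.length.choose 2)) • (l.map S).prod := by
  induction l with
  | nil => simp
  | cons a t ih =>
    have hnd' : t.Nodup := (List.nodup_cons.1 hnd).2
    have ha : a ∉ t := (List.nodup_cons.1 hnd).1
    have hcp : t.countP (· ≠ a) = t.length := by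
      have h1 := countP_ne_add_count t a
      have h0 : t.count a = 0 := List.count_eq_zero_of_not_mem ha
      omega
    have hmove : (t.map S).prod * S a = ((-1:ℝ) ^ t.length) • (S a * (t.map S).prod) := by
      rw [comm_right S hcl t a, hcp]
    simp only [List.reverse_cons, List.map_append, List.prod_append, List.map_cons,
      List.map_nil, List.prod_cons, List.prod_nil, mul_one, ih hnd', smul_mul_assoc,
      hmove, smul_smul, List.length_cons]
    rw [Nat.choose_succ_succ, Nat.choose_one_right, pow_add, mul_comm]

include hsymm

lemma trace_adj_eq (l₁ l₂ : List (Fin 9)) (h₁ : l₁.Pairwise (· < ·))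
    (h₂ : l₂.Pairwise (· < ·)) (hl₁ : l₁.length ≤ 4) (hl₂ : l₂.length ≤ 4) :
    LinearMap.trace ℝ E16 ((l₁.map S).prod * LinearMap.adjoint ((l₂.map S).prod))
      = if l₁ = l₂ then 16 else 0 := by
  rw [adj_prod S hsymm, trace_prod_eq S hcl l₁ l₂ h₁ h₂ hl₁ hl₂]

omit hsymm hcl in
set_option maxHeartbeats 1000000 in
set_option maxRecDepth 100000 in
lemma card256 : Fintype.card {s : Finset (Fin 9) // s.card ≤ 4} = 256 := by decide

lemma span_top :
    Submodule.span ℝ {P : E16 →ₗ[ℝ] E16 | ∃ l : List (Fin 9),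
      l.Pairwise (· < ·) ∧ l.length ≤ 4 ∧ P = (l.map S).prod} = ⊤ := by
  set G := {P : E16 →ₗ[ℝ] E16 | ∃ l : List (Fin 9),
      l.Pairwise (· < ·) ∧ l.length ≤ 4 ∧ P = (l.map S).prod} with hG
  set v : {s : Finset (Fin 9) // s.card ≤ 4} → (E16 →ₗ[ℝ] E16) :=
    fun s => ((s.1.sort (· ≤ ·)).map S).prod with hv
  have hlen : ∀ s : {s : Finset (Fin 9) // s.card ≤ 4}, (s.1.sort (· ≤ ·)).length ≤ 4 :=
    fun s => by rw [Finset.length_sort]; exact s.2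
  have htr : ∀ s t : {s : Finset (Fin 9) // s.card ≤ 4},
      LinearMap.trace ℝ E16 (v s * LinearMap.adjoint (v t))
        = if s = t then 16 else 0 := by
    intro s t
    rw [trace_adj_eq S hsymm hcl _ _ ((Finset.sortedLT_sort _).pairwise) ((Finset.sortedLT_sort _).pairwise)
      (hlen s) (hlen t)]
    by_cases hst : s = t
    · rw [if_pos hst, if_pos (by rw [hst])]
    · rw [if_neg hst, if_neg (fun h => hst (Subtype.ext (by
        rw [← Finset.sort_toFinset s.1 (· ≤ ·), ← Finset.sort_toFinset t.1 (· ≤ ·), h])))]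
  have hindep : LinearIndependent ℝ v := by
    rw [Fintype.linearIndependent_iff]
    intro g hg t
    have h0 := congrArg ((LinearMap.trace ℝ E16).comp
      (LinearMap.mulRight ℝ (LinearMap.adjoint (v t)))) hg
    simp only [map_sum, LinearMap.comp_apply, LinearMap.mulRight_apply, map_zero,
      smul_mul_assoc, map_smul, smul_eq_mul] at h0
    rw [Finset.sum_eq_single t (fun s _ hst => by rw [htr s t, if_neg hst, mul_zero])
      (fun h => absurd (Finset.mem_univ t) h)] at h0
    rw [htr t t, if_pos rfl] at h0
    linarith
  have hrank : Module.finrank ℝ (Submodule.span ℝ (Set.range v)) = 256 := by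
    rw [finrank_span_eq_card hindep, card256]
  have hle : Submodule.span ℝ (Set.range v) ≤ Submodule.span ℝ G :=
    Submodule.span_mono (by
      rintro _ ⟨s, rfl⟩
      exact ⟨_, (Finset.sortedLT_sort _).pairwise, hlen s, rfl⟩)
  have hEnd : Module.finrank ℝ (E16 →ₗ[ℝ] E16) = 256 := by
    rw [Module.finrank_linearMap, finrank_euclideanSpace_fin]
  have h1 : Module.finrank ℝ (Submodule.span ℝ G) ≤ 256 :=
    hEnd ▸ Submodule.finrank_le _
  have h2 : 256 ≤ Module.finrank ℝ (Submodule.span ℝ G) :=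
    hrank ▸ Submodule.finrank_mono hle
  exact Submodule.eq_top_of_finrank_eq (by omega)

lemma omega_scalar : ∃ c : ℝ, ((List.finRange 9).map S).prod = c • 1 := by
  set ω := ((List.finRange 9).map S).prod with hω
  have hcomm : ∀ j, ω * S j = S j * ω := by
    intro j
    have hcnt : (List.finRange 9).countP (· ≠ j) = 8 := by
      have h1 := countP_ne_add_count (List.finRange 9) j
      have h2 : (List.finRange 9).count j = 1 :=
        List.count_eq_one_of_mem (List.nodup_finRange 9) (List.mem_finRange j)
      rw [List.length_finRange] at h1
      omega
    rw [comm_right S hcl _ j, hcnt]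
    norm_num
    exact rfl
  have hprod : ∀ l : List (Fin 9), ω * (l.map S).prod = (l.map S).prod * ω := by
    intro l
    induction l with
    | nil => simp
    | cons a t ih =>
      simp only [List.map_cons, List.prod_cons]
      rw [← mul_assoc, hcomm a, mul_assoc, ih, ← mul_assoc]
  have hall : ∀ A : E16 →ₗ[ℝ] E16, ω * A = A * ω := by
    intro A
    have hA : A ∈ Submodule.span ℝ {P : E16 →ₗ[ℝ] E16 | ∃ l : List (Fin 9),
        l.Pairwise (· < ·) ∧ l.length ≤ 4 ∧ P = (l.map S).prod} := by
      rw [span_top S hsymm hcl]; trivial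
    refine Submodule.span_induction ?_ ?_ ?_ ?_ hA
    · rintro P ⟨l, -, -, rfl⟩; exact hprod l
    · simp
    · intro x y _ _ hx hy; rw [mul_add, add_mul, hx, hy]
    · intro c x _ hx; rw [mul_smul_comm, smul_mul_assoc, hx]
  let b := (EuclideanSpace.basisFun (Fin 16) ℝ).toBasis
  let e := LinearMap.toMatrixAlgEquiv b
  have hcm : ∀ N : Matrix (Fin 16) (Fin 16) ℝ, Commute N (e ω) := by
    intro N
    have hN : N = e (e.symm N) := (e.apply_symm_apply N).symm
    rw [hN, Commute, SemiconjBy, ← map_mul, ← map_mul, hall (e.symm N)]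
  obtain ⟨c, hc⟩ := Matrix.mem_range_scalar_of_commute_single
    (M := e ω) (by intro i j _; exact hcm _)
  refine ⟨c, ?_⟩
  apply e.injective
  rw [map_smul, map_one, ← hc, Matrix.scalar_apply, ← Matrix.smul_one_eq_diagonal]

lemma comp_le (L : ℕ → Submodule ℝ (E16 →ₗ[ℝ] E16))
    (hL : ∀ k, L k = Submodule.span ℝ {P | ∃ l : List (Fin 9),
      l.Pairwise (· < ·) ∧ l.length = k ∧ P = (l.map S).prod})
    (k : ℕ) (hk : k ≤ 9) : L (9 - k) ≤ L k := by
  obtain ⟨c, hc⟩ := omega_scalar S hsymm hcl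
  rw [hL, hL, Submodule.span_le]
  rintro P ⟨l, hsort, hlen, rfl⟩
  set l' := (List.finRange 9).filter (fun x => !(decide (x ∈ l))) with hl'
  have hsort' : l'.Pairwise (· < ·) :=
    List.Pairwise.sublist List.filter_sublist (List.pairwise_lt_finRange 9)
  have hfil : (List.finRange 9).filter (fun x => decide (x ∈ l)) = l := by
    exact sorted_eq_of_mem_iff
      (List.Pairwise.sublist List.filter_sublist (List.pairwise_lt_finRange 9))
      hsort (fun j => by simp [List.mem_filter, List.mem_finRange])
  have hperm : List.Perm (l ++ l') (List.finRange 9) := by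
    have h := List.filter_append_perm (fun x => decide (x ∈ l)) (List.finRange 9)
    rwa [hfil] at h
  have hlen' : l'.length = k := by
    have := hperm.length_eq
    rw [List.length_append, List.length_finRange, hlen] at this
    omega
  have hsortall : (l ++ l').insertionSort (· ≤ ·) = List.finRange 9 :=
    List.Perm.eq_of_pairwise' (List.pairwise_insertionSort _ _)
      ((List.pairwise_lt_finRange 9).imp le_of_lt) ((List.perm_insertionSort _ _).trans hperm)
  obtain ⟨ε, hε, heps⟩ := sort_eps S hcl (l ++ l')
  rw [hsortall] at heps
  have hee : ε * ε = 1 := by rcases hε with h|h <;> rw [h] <;> norm_num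
  have hplpl' : (l.map S).prod * (l'.map S).prod = (ε * c) • 1 := by
    have h2 : ε • ((List.finRange 9).map S).prod
        = ((l ++ l').map S).prod := by
      rw [heps, smul_smul, hee, one_smul]
    rw [List.map_append, List.prod_append] at h2
    rw [← h2, hc, smul_smul]
  have hfinal : (l.map S).prod
      = ((ε * c) * (-1 : ℝ) ^ (k.choose 2)) • (l'.map S).prod := by
    have h1 : (l.map S).prod
        = ((l.map S).prod * (l'.map S).prod) * ((l'.reverse.map S).prod) := by
      rw [mul_assoc, cancel_rev S hcl l', mul_one]
    rw [h1, hplpl', rev_sign S hcl l' hsort'.nodup, hlen', smul_mul_assoc, one_mul,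
      smul_smul]
  rw [hfinal]
  exact Submodule.smul_mem _ _ (Submodule.subset_span ⟨l', hsort', hlen', rfl⟩)

end aux

/-- Lemma 3(1): for a `Cl⁺(9)`-system `S₀,…,S₈` on `ℝ¹⁶`, with `L_k` the span of all
increasing products of `k` of the `Sᵢ`'s: `L_{9−k} = L_k`; the operators `(1/4)S_{i₁}⋯S_{i_k}`
(`0 ≤ k ≤ 4`, `i₁ < ⋯ < i_k`) are orthonormal for the trace inner product and span `End(ℝ¹⁶)`,
which is the orthogonal direct sum `L₀ ⊕ L₁ ⊕ L₂ ⊕ L₃ ⊕ L₄`; moreover the symmetric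
endomorphisms form `L₀ ⊕ L₁ ⊕ L₄` and the skew-symmetric ones form `L₂ ⊕ L₃`. -/
theorem stmt7 (S : Fin 9 → (E16 →ₗ[ℝ] E16))
    (hsymm : ∀ i, LinearMap.adjoint (S i) = S i)
    (hcl : ∀ i j, S i * S j + S j * S i =
      if i = j then (2 : ℝ) • (1 : E16 →ₗ[ℝ] E16) else 0)
    (L : ℕ → Submodule ℝ (E16 →ₗ[ℝ] E16))
    (hL : ∀ k, L k = Submodule.span ℝ
      {P | ∃ l : List (Fin 9), l.Pairwise (· < ·) ∧ l.length = k ∧ P = (l.map S).prod}) :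
    (∀ k ≤ 9, L (9 - k) = L k) ∧
    (∀ l₁ l₂ : List (Fin 9), l₁.Pairwise (· < ·) → l₂.Pairwise (· < ·) →
      l₁.length ≤ 4 → l₂.length ≤ 4 →
      LinearMap.trace ℝ E16
        ((((1 : ℝ)/4) • (l₁.map S).prod) * LinearMap.adjoint (((1 : ℝ)/4) • (l₂.map S).prod))
        = if l₁ = l₂ then 1 else 0) ∧
    (L 0 ⊔ L 1 ⊔ L 2 ⊔ L 3 ⊔ L 4 = ⊤) ∧
    (∀ k k' : ℕ, k ≤ 4 → k' ≤ 4 → k ≠ k' → ∀ P ∈ L k, ∀ Q ∈ L k',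
      LinearMap.trace ℝ E16 (P * LinearMap.adjoint Q) = 0) ∧
    (∀ A : E16 →ₗ[ℝ] E16,
      (LinearMap.adjoint A = A ↔ A ∈ L 0 ⊔ L 1 ⊔ L 4) ∧
      (LinearMap.adjoint A = -A ↔ A ∈ L 2 ⊔ L 3)) := by

  have hadj_smul : ∀ (c : ℝ) (A : E16 →ₗ[ℝ] E16),
      LinearMap.adjoint (c • A) = c • LinearMap.adjoint A := by
    intro c A
    simp
  -- Part (iii): top
  have htop : L 0 ⊔ L 1 ⊔ L 2 ⊔ L 3 ⊔ L 4 = ⊤ := by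
    refine le_antisymm le_top ?_
    rw [← span_top S hsymm hcl, Submodule.span_le]
    rintro P ⟨l, hs, hle4, rfl⟩
    have hmem : (l.map S).prod ∈ L l.length := by
      rw [hL]; exact Submodule.subset_span ⟨l, hs, rfl, rfl⟩
    interval_cases h : l.length
    · exact Submodule.mem_sup_left (Submodule.mem_sup_left
        (Submodule.mem_sup_left (Submodule.mem_sup_left hmem)))
    · exact Submodule.mem_sup_left (Submodule.mem_sup_left
        (Submodule.mem_sup_left (Submodule.mem_sup_right hmem)))
    · exact Submodule.mem_sup_left (Submodule.mem_sup_left (Submodule.mem_sup_right hmem))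
    · exact Submodule.mem_sup_left (Submodule.mem_sup_right hmem)
    · exact Submodule.mem_sup_right hmem
  -- Part (i)
  have hpart1 : ∀ k ≤ 9, L (9 - k) = L k := by
    intro k hk
    refine le_antisymm (comp_le S hsymm hcl L hL k hk) ?_
    have h2 := comp_le S hsymm hcl L hL (9 - k) (by omega)
    rwa [show 9 - (9 - k) = k by omega] at h2
  -- Part (ii)
  have hpart2 : ∀ l₁ l₂ : List (Fin 9), l₁.Pairwise (· < ·) → l₂.Pairwise (· < ·) →
      l₁.length ≤ 4 → l₂.length ≤ 4 →
      LinearMap.trace ℝ E16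
        ((((1 : ℝ)/4) • (l₁.map S).prod) * LinearMap.adjoint (((1 : ℝ)/4) • (l₂.map S).prod))
        = if l₁ = l₂ then 1 else 0 := by
    intro l₁ l₂ h₁ h₂ hl₁ hl₂
    rw [hadj_smul, smul_mul_assoc, mul_smul_comm, map_smul, map_smul,
      trace_adj_eq S hsymm hcl l₁ l₂ h₁ h₂ hl₁ hl₂]
    split <;> norm_num
  -- Part (iv)
  have hpart4 : ∀ k k' : ℕ, k ≤ 4 → k' ≤ 4 → k ≠ k' → ∀ P ∈ L k, ∀ Q ∈ L k',
      LinearMap.trace ℝ E16 (P * LinearMap.adjoint Q) = 0 := by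
    intro k k' hk hk' hkk' P hP Q hQ
    rw [hL] at hP hQ
    have inner : ∀ (l₁ : List (Fin 9)), l₁.Pairwise (· < ·) → l₁.length = k →
        LinearMap.trace ℝ E16 ((l₁.map S).prod * LinearMap.adjoint Q) = 0 := by
      intro l₁ hs1 hl1
      refine Submodule.span_induction ?_ ?_ ?_ ?_ hQ
      · rintro Q' ⟨l₂, hs2, hl2, rfl⟩
        rw [trace_adj_eq S hsymm hcl l₁ l₂ hs1 hs2 (hl1 ▸ hk) (hl2 ▸ hk'), if_neg]
        intro h
        exact hkk' (by rw [← hl1, ← hl2, h])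
      · simp
      · intro x y _ _ hx hy
        rw [map_add, mul_add, map_add, hx, hy, add_zero]
      · intro c x _ hx
        rw [hadj_smul, mul_smul_comm, map_smul, hx, smul_zero]
    refine Submodule.span_induction ?_ ?_ ?_ ?_ hP
    · rintro P' ⟨l₁, hs1, hl1, rfl⟩
      exact inner l₁ hs1 hl1
    · simp
    · intro x y _ _ hx hy
      rw [add_mul, map_add, hx, hy, add_zero]
    · intro c x _ hx
      rw [smul_mul_assoc, map_smul, hx, smul_zero]
  -- Part (v)
  have hsym_le : ∀ k : ℕ, Even (k.choose 2) →
      ∀ P ∈ L k, LinearMap.adjoint P = P := by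
    intro k hkev P hP
    rw [hL] at hP
    refine Submodule.span_induction ?_ ?_ ?_ ?_ hP
    · rintro P' ⟨l, hs, hlen, rfl⟩
      rw [adj_prod S hsymm, rev_sign S hcl l hs.nodup, hlen, Even.neg_one_pow hkev, one_smul]
    · simp
    · intro x y _ _ hx hy; rw [map_add, hx, hy]
    · intro c x _ hx; rw [hadj_smul, hx]
  have hskew_le : ∀ k : ℕ, Odd (k.choose 2) →
      ∀ P ∈ L k, LinearMap.adjoint P = -P := by
    intro k hkodd P hP
    rw [hL] at hP
    refine Submodule.span_induction ?_ ?_ ?_ ?_ hP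
    · rintro P' ⟨l, hs, hlen, rfl⟩
      rw [adj_prod S hsymm, rev_sign S hcl l hs.nodup, hlen, Odd.neg_one_pow hkodd,
        neg_one_smul]
    · simp
    · intro x y _ _ hx hy; rw [map_add, hx, hy, neg_add]
    · intro c x _ hx; rw [hadj_smul, hx, smul_neg]
  have hsymsup : ∀ P ∈ L 0 ⊔ L 1 ⊔ L 4, LinearMap.adjoint P = P := by
    intro P hP
    obtain ⟨B, hB, C, hC, rfl⟩ := Submodule.mem_sup.1 hP
    obtain ⟨B0, hB0, B1, hB1, rfl⟩ := Submodule.mem_sup.1 hB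
    rw [map_add, map_add, hsym_le 0 (by decide) _ hB0, hsym_le 1 (by decide) _ hB1,
      hsym_le 4 (by decide) _ hC]
  have hskewsup : ∀ P ∈ L 2 ⊔ L 3, LinearMap.adjoint P = -P := by
    intro P hP
    obtain ⟨B, hB, C, hC, rfl⟩ := Submodule.mem_sup.1 hP
    rw [map_add, hskew_le 2 (by decide) _ hB, hskew_le 3 (by decide) _ hC, neg_add]
  have htop2 : (L 0 ⊔ L 1 ⊔ L 4) ⊔ (L 2 ⊔ L 3) = ⊤ := by
    refine le_antisymm le_top ?_
    rw [← htop]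
    refine sup_le (sup_le (sup_le (sup_le ?_ ?_) ?_) ?_) ?_
    · exact le_sup_left.trans (le_sup_left.trans le_sup_left)
    · exact le_sup_right.trans (le_sup_left.trans le_sup_left)
    · exact le_sup_left.trans le_sup_right
    · exact le_sup_right.trans le_sup_right
    · exact le_sup_right.trans le_sup_left
  have hdecomp : ∀ A : E16 →ₗ[ℝ] E16, ∃ B ∈ L 0 ⊔ L 1 ⊔ L 4, ∃ C ∈ L 2 ⊔ L 3, A = B + C := by
    intro A
    have hA : A ∈ (L 0 ⊔ L 1 ⊔ L 4) ⊔ (L 2 ⊔ L 3) := by rw [htop2]; trivial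
    obtain ⟨B, hB, C, hC, hBC⟩ := Submodule.mem_sup.1 hA
    exact ⟨B, hB, C, hC, hBC.symm⟩
  have hpart5 : ∀ A : E16 →ₗ[ℝ] E16,
      (LinearMap.adjoint A = A ↔ A ∈ L 0 ⊔ L 1 ⊔ L 4) ∧
      (LinearMap.adjoint A = -A ↔ A ∈ L 2 ⊔ L 3) := by
    intro A
    constructor
    · constructor
      · intro hA
        obtain ⟨B, hB, C, hC, rfl⟩ := hdecomp A
        rw [map_add, hsymsup B hB, hskewsup C hC] at hA
        have hC0 : C = 0 := by
          have h1 : -C = C := add_left_cancel hA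
          have h2 : C + C = 0 := by nth_rw 1 [← h1]; exact neg_add_cancel C
          have h3 : (2:ℝ) • C = 0 := by rw [two_smul, h2]
          simpa using h3
        rw [hC0, add_zero]
        exact hB
      · intro hA
        exact hsymsup A hA
    · constructor
      · intro hA
        obtain ⟨B, hB, C, hC, rfl⟩ := hdecomp A
        rw [map_add, hsymsup B hB, hskewsup C hC, neg_add] at hA
        have h3 : B = -B := add_right_cancel hA
        have hB0 : B = 0 := by
          have h2 : B + B = 0 := by nth_rw 1 [h3]; exact neg_add_cancel B
          have h4 : (2:ℝ) • B = 0 := by rw [two_smul, h2]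
          simpa using h4
        rw [hB0, zero_add]
        exact hC
      · intro hA
        exact hskewsup A hA
  exact ⟨hpart1, hpart2, htop, hpart4, hpart5⟩
end

section
/- Let S_0, …, S_8 be a Cl⁺(9)-system on ℝ^16 and let L_1 be the linear span of S_0, …, S_8 in End(ℝ^16). If S'_0, …, S'_8 ∈ L_1 are pairwise orthogonal with respect to the trace inner product and each has norm 4 (i.e. Tr(S'_i(S'_j)ᵗ) = 16δ_{ij}), then Σ_{i=0}^{8} S'_iQS'_i = Σ_{i=0}^{8} S_iQS_i for every Q ∈ End(ℝ^16); that is, the operator A(Q) = Σ_i S_iQS_i does not depend on the choice of such an orthogonal family spanning L_1. -/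
/-- Lemma 3(2), independence of basis: if `S'₀,…,S'₈` lie in the span `L₁` of a
`Cl⁺(9)`-system `S₀,…,S₈` and are orthogonal of norm 4 for the trace inner product,
then `Σᵢ S'ᵢQS'ᵢ = Σᵢ SᵢQSᵢ` for every endomorphism `Q`. -/
theorem stmt9 (S : Fin 9 → (E16 →ₗ[ℝ] E16))
    (hsymm : ∀ i, LinearMap.adjoint (S i) = S i)
    (hcl : ∀ i j, S i * S j + S j * S i =
      if i = j then (2 : ℝ) • (1 : E16 →ₗ[ℝ] E16) else 0)
    (S' : Fin 9 → (E16 →ₗ[ℝ] E16))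
    (hmem : ∀ i, S' i ∈ Submodule.span ℝ (Set.range S))
    (horth : ∀ i j, LinearMap.trace ℝ E16 (S' i * LinearMap.adjoint (S' j))
      = if i = j then 16 else 0) :
    ∀ Q : E16 →ₗ[ℝ] E16, ∑ i, S' i * Q * S' i = ∑ i, S i * Q * S i := by
  intro Q
  -- trace of S k * S l
  have htr : ∀ k l, LinearMap.trace ℝ E16 (S k * S l) = if k = l then 16 else 0 := by
    intro k l
    have h1 : LinearMap.trace ℝ E16 (S k * S l) = LinearMap.trace ℝ E16 (S l * S k) :=
      LinearMap.trace_mul_comm ℝ (S k) (S l)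
    by_cases hkl : k = l
    · subst hkl
      have h := hcl k k
      rw [if_pos rfl] at h
      have hsq : S k * S k = 1 := by
        have h2 : (2 : ℝ) • (S k * S k) = (2 : ℝ) • (1 : E16 →ₗ[ℝ] E16) := by
          rw [two_smul]; exact h
        exact smul_right_injective _ (by norm_num : (2:ℝ) ≠ 0) h2
      rw [if_pos rfl, hsq, LinearMap.trace_one]
      norm_num [E16]
    · have h := hcl k l
      rw [if_neg hkl] at h
      have h2 := congrArg (LinearMap.trace ℝ E16) h
      rw [map_add, map_zero] at h2
      rw [if_neg hkl]
      linarith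
  -- coefficients
  choose c hc using fun i => (Submodule.mem_span_range_iff_exists_fun ℝ).mp (hmem i)
  -- rows orthonormal
  have hrow : ∀ i j, ∑ k, c i k * c j k = if i = j then 1 else 0 := by
    intro i j
    have hadj : LinearMap.adjoint (S' j) = S' j := by
      rw [← hc j, map_sum]
      refine Finset.sum_congr rfl fun l _ => ?_
      rw [map_smul, hsymm]
    have := horth i j
    rw [hadj, ← hc i, ← hc j, Finset.sum_mul] at this
    simp only [Finset.mul_sum, smul_mul_assoc, mul_smul_comm, map_sum, map_smul,
      smul_eq_mul, htr] at this
    have key : (∑ k, c i k * c j k) * 16 = if i = j then 16 else 0 := by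
      rw [← this, Finset.sum_mul]
      refine Finset.sum_congr rfl fun k _ => ?_
      simp only [mul_ite, mul_zero, Finset.sum_ite_eq, Finset.mem_univ, if_pos]
      ring
    rcases eq_or_ne i j with h | h
    · subst h; rw [if_pos rfl] at key ⊢; linarith
    · rw [if_neg h] at key ⊢; linarith
  -- columns orthonormal
  have hcol : ∀ k l, ∑ i, c i k * c i l = if k = l then 1 else 0 := by
    have hCC : (Matrix.of c) * (Matrix.of c).transpose = 1 := by
      ext i j
      simp [Matrix.mul_apply, Matrix.one_apply, hrow i j]
    have hCtC := mul_eq_one_comm.mp hCC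
    intro k l
    have h := congrFun (congrFun hCtC k) l
    simpa [Matrix.mul_apply, Matrix.one_apply] using h
  have expand : ∀ i, S' i * Q * S' i = ∑ k, ∑ l, (c i k * c i l) • (S k * Q * S l) := by
    intro i
    rw [← hc i]
    simp_rw [Finset.sum_mul, Finset.mul_sum, smul_mul_assoc, mul_smul_comm, smul_smul]
  calc ∑ i, S' i * Q * S' i = ∑ i, ∑ k, ∑ l, (c i k * c i l) • (S k * Q * S l) := by simp_rw [expand]
    _ = ∑ k, ∑ l, (∑ i, c i k * c i l) • (S k * Q * S l) := by
      rw [Finset.sum_comm]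
      refine Finset.sum_congr rfl fun k _ => ?_
      rw [Finset.sum_comm]
      refine Finset.sum_congr rfl fun l _ => ?_
      rw [Finset.sum_smul]
    _ = ∑ k, S k * Q * S k := by
      simp_rw [hcol]
      simp [ite_smul]
end

section
/- Let S_0, …, S_8 be a Cl⁺(9)-system on ℝ^16. Then for every X ∈ ℝ^16: X lies in the linear span of S_0X, …, S_8X, and Σ_{i=0}^{8} ⟨S_iX, X⟩S_iX = ‖X‖²X. Moreover, for all X, Y ∈ ℝ^16, Σ_{i=0}^{8} (2⟨S_iX, Y⟩S_iX + ⟨S_iX, X⟩S_iY) = ‖X‖²Y + 2⟨X, Y⟩X. -/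
namespace Cl9

open LinearMap Finset

noncomputable section

abbrev En := E16 →ₗ[ℝ] E16

abbrev tr : En →ₗ[ℝ] ℝ := LinearMap.trace ℝ E16

/-- rank one operator `v ↦ ⟪X,v⟫ X`. -/
def Pm (X : E16) : En where
  toFun v := (inner ℝ X v : ℝ) • X
  map_add' u v := by rw [inner_add_right, add_smul]
  map_smul' c v := by rw [real_inner_smul_right, mul_smul, RingHom.id_apply]

@[simp] lemma Pm_apply (X v : E16) : Pm X v = (inner ℝ X v : ℝ) • X := rfl

lemma trace_mul_Pm (X : E16) (f : En) : tr (f * Pm X) = (inner ℝ X (f X) : ℝ) := by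
  classical
  rw [LinearMap.trace_eq_matrix_trace ℝ ((EuclideanSpace.basisFun (Fin 16) ℝ).toBasis)]
  rw [Matrix.trace]
  have : ∀ i, (LinearMap.toMatrix (EuclideanSpace.basisFun (Fin 16) ℝ).toBasis
      (EuclideanSpace.basisFun (Fin 16) ℝ).toBasis (f * Pm X)).diag i
      = X i * f X i := by
    intro i
    rw [Matrix.diag_apply, LinearMap.toMatrix_apply,
      OrthonormalBasis.coe_toBasis_repr_apply, OrthonormalBasis.coe_toBasis]
    rw [EuclideanSpace.basisFun_apply]
    show (EuclideanSpace.basisFun (Fin 16) ℝ).repr ((f ∘ₗ Pm X) (EuclideanSpace.single i 1)) i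
      = X i * f X i
    rw [LinearMap.comp_apply, Pm_apply, EuclideanSpace.inner_single_right]
    simp only [map_smul, EuclideanSpace.basisFun_repr, conj_trivial]
    simp
  rw [Finset.sum_congr rfl (fun i _ => this i)]
  rw [PiLp.inner_apply]
  simp [conj_trivial, mul_comm]


variable (S : Fin 9 → En)

/-- word -/
def W (l : List (Fin 9)) : En := (l.map S).prod

@[simp] lemma W_nil : W S [] = 1 := rfl

@[simp] lemma W_cons (a : Fin 9) (l : List (Fin 9)) : W S (a :: l) = S a * W S l := by
  simp [W]

lemma W_append (l₁ l₂ : List (Fin 9)) : W S (l₁ ++ l₂) = W S l₁ * W S l₂ := by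
  simp [W, List.prod_append]

section

variable (hsymm : ∀ i, LinearMap.adjoint (S i) = S i)
  (hcl : ∀ i j, S i * S j + S j * S i =
      if i = j then (2 : ℝ) • (1 : En) else 0)

include hcl

lemma hS2 (i : Fin 9) : S i * S i = 1 := by
  have h := hcl i i
  simp only [if_pos rfl] at h
  have : (2:ℝ) • (S i * S i) = (2:ℝ) • (1 : En) := by
    rw [two_smul]; exact h
  exact smul_right_injective _ (by norm_num) this

lemma hSanti {i j : Fin 9} (h : i ≠ j) : S i * S j = - (S j * S i) := by
  have h2 := hcl i j
  rw [if_neg h] at h2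
  exact eq_neg_of_add_eq_zero_left h2

lemma move (i : Fin 9) : ∀ l : List (Fin 9),
    S i * W S l = ((-1 : ℝ) ^ (l.filter (fun j => j ≠ i)).length) • (W S l * S i)
  | [] => by simp
  | a :: t => by
    by_cases hai : a = i
    · subst hai
      rw [List.filter_cons_of_neg (by simp), W_cons, ← mul_assoc, hS2 S hcl a, one_mul,
        move a t, smul_mul_assoc, smul_smul, ← pow_add, Even.neg_one_pow ⟨_, rfl⟩, one_smul,
        mul_assoc, hS2 S hcl a, mul_one]
    · have hia : S i * S a = - (S a * S i) := hSanti S hcl (Ne.symm hai)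
      rw [List.filter_cons_of_pos (by simp [hai]), W_cons, ← mul_assoc, hia, neg_mul,
        mul_assoc, move i t, mul_smul_comm, List.length_cons, pow_succ, ← mul_assoc]
      module

lemma conj (i : Fin 9) (l : List (Fin 9)) :
    S i * W S l * S i = ((-1 : ℝ) ^ (l.filter (fun j => j ≠ i)).length) • W S l := by
  rw [mul_assoc, ← mul_assoc, move S hcl i l, smul_mul_assoc, mul_assoc, hS2 S hcl i, mul_one]

lemma W_mul_reverse : ∀ l : List (Fin 9), W S l * W S l.reverse = 1
  | [] => by simp
  | a :: t => by
    rw [W_cons, List.reverse_cons, W_append, ← mul_assoc, mul_assoc (S a),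
      W_mul_reverse t, mul_one]
    simp [W, hS2 S hcl a]

lemma W_reverse_mul (l : List (Fin 9)) : W S l.reverse * W S l = 1 := by
  have := W_mul_reverse S hcl l.reverse
  rwa [List.reverse_reverse] at this

omit hcl in
lemma count_filter_ne : ∀ (l : List (Fin 9)) (i : Fin 9),
    (l.filter (fun j => j ≠ i)).length + l.count i = l.length
  | [], i => by simp
  | a :: t, i => by
    by_cases hai : a = i
    · subst hai
      rw [List.filter_cons_of_neg (by simp), List.count_cons_self, List.length_cons,
        ← count_filter_ne t a]
      omega
    · rw [List.filter_cons_of_pos (by simp [hai]), List.count_cons_of_ne hai,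
        List.length_cons, List.length_cons, ← count_filter_ne t i]
      omega

lemma trace_W_eq_zero {l : List (Fin 9)} {i : Fin 9} (hlen : Even l.length)
    (hodd : Odd (l.count i)) : tr (W S l) = 0 := by
  have hm : Odd (l.filter (fun j => j ≠ i)).length := by
    have h1 := count_filter_ne l i
    obtain ⟨a, ha⟩ := hlen
    obtain ⟨b, hb⟩ := hodd
    exact ⟨a - b - 1, by omega⟩
  have key : tr (W S l) = - tr (W S l) := by
    conv_lhs => rw [← one_mul (W S l), ← hS2 S hcl i, mul_assoc]
    rw [trace_mul_comm, conj S hcl i l, map_smul, Odd.neg_one_pow hm, neg_one_smul]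
  linarith

lemma hmove' {a : Fin 9} {t : List (Fin 9)} (hat : a ∉ t) :
    W S t * S a = ((-1 : ℝ) ^ t.length) • (S a * W S t) := by
  have hfil : t.filter (fun j => j ≠ a) = t :=
    List.filter_eq_self.mpr (fun b hb => by simp; exact fun h => hat (h ▸ hb))
  have hmove := move S hcl a t
  rw [hfil] at hmove
  rw [hmove, smul_smul, ← pow_add, Even.neg_one_pow ⟨_, rfl⟩, one_smul]

lemma W_reverse_eq : ∀ l : List (Fin 9), l.Nodup →
    W S l.reverse = ((-1 : ℝ) ^ (l.length.choose 2)) • W S l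
  | [], _ => by simp
  | a :: t, hnd => by
    have hat : a ∉ t := (List.nodup_cons.mp hnd).1
    have hnt : t.Nodup := (List.nodup_cons.mp hnd).2
    rw [List.reverse_cons, W_append, W_reverse_eq t hnt, W_cons]
    simp only [W_cons, W_nil, mul_one]
    have hch : (t.length + 1).choose 2 = t.length + t.length.choose 2 := by
      rw [show (t.length + 1).choose 2 = t.length.choose 1 + t.length.choose 2 from rfl,
        Nat.choose_one_right]
    rw [smul_mul_assoc, hmove' S hcl hat, smul_smul, ← pow_add, List.length_cons, hch, add_comm]

section
variable (hsymm : ∀ i, LinearMap.adjoint (S i) = S i)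
include hsymm

lemma adjoint_W : ∀ l : List (Fin 9), LinearMap.adjoint (W S l) = W S l.reverse
  | [] => by
    simp only [W_nil, List.reverse_nil]
    rw [← LinearMap.star_eq_adjoint, star_one]
  | a :: t => by
    rw [W_cons, Module.End.mul_eq_comp, adjoint_comp, adjoint_W t, hsymm,
      List.reverse_cons, W_append, ← Module.End.mul_eq_comp]
    simp [W]

end

/-! ### subsets and padding -/

def pad (B : Finset (Fin 8)) : Finset (Fin 9) :=
  if Even B.card then B.map Fin.castSuccEmb else insert (Fin.last 8) (B.map Fin.castSuccEmb)

omit hcl in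
lemma last_not_mem_map (B : Finset (Fin 8)) : Fin.last 8 ∉ B.map Fin.castSuccEmb := by
  intro h
  obtain ⟨b, _, hb⟩ := Finset.mem_map.mp h
  exact (Fin.castSucc_lt_last b).ne (by exact hb)

omit hcl in
lemma last_mem_pad_iff (B : Finset (Fin 8)) : Fin.last 8 ∈ pad B ↔ ¬ Even B.card := by
  unfold pad
  split
  · exact iff_of_false (last_not_mem_map B) (not_not.mpr ‹_›)
  · simp_all [Finset.mem_insert]

omit hcl in
lemma card_pad_even (B : Finset (Fin 8)) : Even (pad B).card := by
  unfold pad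
  split
  · rwa [Finset.card_map]
  · rw [Finset.card_insert_of_notMem (last_not_mem_map B), Finset.card_map]
    rw [Nat.even_add_one]
    simpa using ‹¬ Even B.card›

omit hcl in
lemma pad_inj : Function.Injective pad := by
  intro B₁ B₂ h
  by_cases h1 : Even B₁.card <;> by_cases h2 : Even B₂.card
  · unfold pad at h
    rw [if_pos h1, if_pos h2] at h
    exact Finset.map_injective _ h
  · exfalso
    have := last_mem_pad_iff B₂
    rw [← h, last_mem_pad_iff B₁] at this
    tauto
  · exfalso
    have := last_mem_pad_iff B₂
    rw [← h, last_mem_pad_iff B₁] at this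
    tauto
  · unfold pad at h
    rw [if_neg h1, if_neg h2] at h
    apply Finset.map_injective Fin.castSuccEmb
    have e1 := Finset.erase_insert (last_not_mem_map B₁)
    have e2 := Finset.erase_insert (last_not_mem_map B₂)
    rw [← e1, ← e2, h]

omit hcl in
lemma pad_empty : pad ∅ = ∅ := by simp [pad]

omit hcl in
lemma pad_eq_empty_iff (B : Finset (Fin 8)) : pad B = ∅ ↔ B = ∅ := by
  constructor
  · intro h
    unfold pad at h
    split at h
    · exact Finset.map_eq_empty.mp h
    · exact absurd h (Finset.insert_ne_empty _ _)
  · rintro rfl; exact pad_empty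

/-! ### monomials indexed by finsets -/

def VB (A : Finset (Fin 9)) : En := W S (A.sort (· ≤ ·))

omit hcl in
@[simp] lemma VB_empty : VB S ∅ = 1 := by
  rw [VB, Finset.sort_empty, W_nil]

omit hcl in
lemma count_sort (A : Finset (Fin 9)) (i : Fin 9) :
    (A.sort (· ≤ ·)).count i = if i ∈ A then 1 else 0 := by
  split
  · exact List.count_eq_one_of_mem (Finset.sort_nodup _ _) (by rwa [Finset.mem_sort])
  · exact List.count_eq_zero_of_not_mem (by rwa [Finset.mem_sort])

section
variable (hsymm : ∀ i, LinearMap.adjoint (S i) = S i)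
include hsymm

lemma trace_VB_mul {A₁ A₂ : Finset (Fin 9)} (h1 : Even A₁.card) (h2 : Even A₂.card) :
    tr (LinearMap.adjoint (VB S A₁) * VB S A₂) = if A₁ = A₂ then 16 else 0 := by
  by_cases h : A₁ = A₂
  · subst h
    rw [if_pos rfl, VB, adjoint_W S hsymm hcl, W_reverse_mul S hcl, LinearMap.trace_one]
    norm_num [finrank_euclideanSpace]
  · rw [if_neg h, VB, VB, adjoint_W S hsymm hcl, ← W_append]
    have hex : ∃ i, (i ∈ A₁ ∧ i ∉ A₂) ∨ (i ∈ A₂ ∧ i ∉ A₁) := by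
      by_contra hc
      push_neg at hc
      exact h (Finset.ext fun a => ⟨(hc a).1, (hc a).2⟩)
    obtain ⟨i, hi⟩ := hex
    have hlen : Even ((A₁.sort (· ≤ ·)).reverse ++ A₂.sort (· ≤ ·)).length := by
      rw [List.length_append, List.length_reverse, Finset.length_sort, Finset.length_sort]
      exact h1.add h2
    have hodd : Odd (((A₁.sort (· ≤ ·)).reverse ++ A₂.sort (· ≤ ·)).count i) := by
      rw [List.count_append, List.count_reverse, count_sort, count_sort]
      rcases hi with ⟨hm, hn⟩ | ⟨hm, hn⟩ <;> simp [hm, hn]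
    exact trace_W_eq_zero S hcl hlen hodd

lemma adjoint_VB (A : Finset (Fin 9)) :
    LinearMap.adjoint (VB S A) = ((-1 : ℝ) ^ (A.card.choose 2)) • VB S A := by
  rw [VB, adjoint_W S hsymm hcl, W_reverse_eq S hcl _ (Finset.sort_nodup _ _), Finset.length_sort]

end

lemma conj_VB (i : Fin 9) {A : Finset (Fin 9)} (hA : Even A.card) :
    S i * VB S A * S i = (if i ∈ A then (-1 : ℝ) else 1) • VB S A := by
  rw [VB, conj S hcl i]
  congr 1
  have hc := count_filter_ne (A.sort (· ≤ ·)) i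
  rw [count_sort, Finset.length_sort] at hc
  split
  · next hmem =>
    rw [if_pos hmem] at hc
    have : Odd ((A.sort (· ≤ ·)).filter (fun j => j ≠ i)).length := by
      obtain ⟨a, ha⟩ := hA
      exact ⟨a - 1, by omega⟩
    rw [Odd.neg_one_pow this]
  · next hmem =>
    rw [if_neg hmem] at hc
    have : Even ((A.sort (· ≤ ·)).filter (fun j => j ≠ i)).length := by
      obtain ⟨a, ha⟩ := hA
      exact ⟨a, by omega⟩
    rw [Even.neg_one_pow this]

/-! ### the spanning family -/

def Fam (B : Finset (Fin 8)) : En := VB S (pad B)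

def lam (A : Finset (Fin 9)) : ℝ := ∑ i : Fin 9, (if i ∈ A then (-1 : ℝ) else 1)

omit hcl in
lemma lam_eq (A : Finset (Fin 9)) : lam A = 9 - 2 * (A.card : ℝ) := by
  unfold lam
  have h : ∀ i : Fin 9, (if i ∈ A then (-1 : ℝ) else 1)
      = 1 - 2 * (if i ∈ A then (1 : ℝ) else 0) := by
    intro i; split <;> norm_num
  rw [Finset.sum_congr rfl (fun i _ => h i), Finset.sum_sub_distrib, Finset.sum_const,
    ← Finset.mul_sum, Finset.sum_boole, Finset.filter_univ_mem]
  simp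

lemma conj_Fam (i : Fin 9) (B : Finset (Fin 8)) :
    S i * Fam S B * S i = (if i ∈ pad B then (-1 : ℝ) else 1) • Fam S B :=
  conj_VB S hcl i (card_pad_even B)

section
variable (hsymm : ∀ i, LinearMap.adjoint (S i) = S i)
include hsymm

lemma pair_trace (c : Finset (Fin 8) → ℝ) (B₀ : Finset (Fin 8)) :
    tr (LinearMap.adjoint (Fam S B₀) * ∑ B, c B • Fam S B) = 16 * c B₀ := by
  rw [Finset.mul_sum]
  simp_rw [mul_smul_comm]
  rw [map_sum]
  simp_rw [map_smul]
  have h : ∀ B, tr (LinearMap.adjoint (Fam S B₀) * Fam S B) = if B₀ = B then 16 else 0 := by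
    intro B
    rw [Fam, Fam, trace_VB_mul S hsymm hcl (card_pad_even _) (card_pad_even _)]
    simp [pad_inj.eq_iff]
  simp_rw [h, smul_ite, smul_zero]
  rw [Finset.sum_ite_eq Finset.univ B₀ (fun B => c B • (16:ℝ))]
  simp [mul_comm]

lemma fam_li : LinearIndependent ℝ (Fam S) := by
  rw [Fintype.linearIndependent_iff]
  intro g hg B
  have h := pair_trace S hsymm hcl g B
  rw [hg, mul_zero, map_zero] at h
  linarith

lemma fam_span : Submodule.span ℝ (Set.range (Fam S)) = ⊤ := by
  apply (fam_li S hsymm hcl).span_eq_top_of_card_eq_finrank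
  rw [Fintype.card_finset, Module.finrank_linearMap, finrank_euclideanSpace]
  simp

end

section
variable (hsymm : ∀ i, LinearMap.adjoint (S i) = S i)
include hsymm

omit hcl in
lemma inner_S_left (X Y : E16) (i : Fin 9) :
    (inner ℝ (S i X) Y : ℝ) = (inner ℝ X (S i Y) : ℝ) := by
  conv_lhs => rw [← hsymm i]
  rw [LinearMap.adjoint_inner_left]

lemma inner_SS (X : E16) (i j : Fin 9) :
    (inner ℝ X (S i (S j X)) : ℝ) = if i = j then ‖X‖ ^ 2 else 0 := by
  split
  · next h =>
    subst h
    have : S i (S i X) = X := by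
      have := hS2 S hcl i
      calc S i (S i X) = (S i * S i) X := rfl
        _ = X := by rw [this]; rfl
    rw [this, real_inner_self_eq_norm_sq]
  · next h =>
    have h0 : (S i * S j + S j * S i) X = (0 : En) X := by rw [hcl i j, if_neg h]
    have h1 : S i (S j X) + S j (S i X) = 0 := by
      simpa [LinearMap.add_apply, Module.End.mul_apply] using h0
    have h2 : (inner ℝ X (S i (S j X)) : ℝ) + (inner ℝ X (S j (S i X)) : ℝ) = 0 := by
      rw [← inner_add_right, h1, inner_zero_right]
    have h3 : (inner ℝ X (S j (S i X)) : ℝ) = (inner ℝ X (S i (S j X)) : ℝ) :=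
      calc (inner ℝ X (S j (S i X)) : ℝ) = (inner ℝ (S j X) (S i X) : ℝ) :=
            (inner_S_left S hsymm X (S i X) j).symm
        _ = (inner ℝ (S i X) (S j X) : ℝ) := real_inner_comm _ _
        _ = (inner ℝ X (S i (S j X)) : ℝ) := inner_S_left S hsymm X (S j X) i
    linarith

lemma hOrtho (X : E16) (i j : Fin 9) :
    (inner ℝ (S i X) (S j X) : ℝ) = if i = j then ‖X‖ ^ 2 else 0 := by
  rw [inner_S_left S hsymm, inner_SS S hsymm hcl]

end

section
variable (hsymm : ∀ i, LinearMap.adjoint (S i) = S i)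
include hsymm

lemma q_eq (X : E16) : (∑ i, (inner ℝ (S i X) X : ℝ) ^ 2) = ‖X‖ ^ 4 := by
  obtain ⟨c, hc⟩ : ∃ c : Finset (Fin 8) → ℝ, ∑ B, c B • Fam S B = Pm X := by
    have hmem : Pm X ∈ Submodule.span ℝ (Set.range (Fam S)) := by
      rw [fam_span S hsymm hcl]; trivial
    exact (Submodule.mem_span_range_iff_exists_fun ℝ).mp hmem
  have hPF : ∀ B, tr (Pm X * Fam S B) = (inner ℝ X (Fam S B X) : ℝ) := by
    intro B; rw [LinearMap.trace_mul_comm, trace_mul_Pm]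
  have hFP : ∀ B, tr (Fam S B * Pm X) = (inner ℝ X (Fam S B X) : ℝ) := by
    intro B; rw [trace_mul_Pm]
  have hcd : ∀ B, (inner ℝ X (Fam S B X) : ℝ) = 16 * c B := by
    intro B
    have h := pair_trace S hsymm hcl c B
    rw [hc, trace_mul_Pm] at h
    calc (inner ℝ X (Fam S B X) : ℝ)
        = (inner ℝ (LinearMap.adjoint (Fam S B) X) X : ℝ) := by
          rw [LinearMap.adjoint_inner_left]
      _ = (inner ℝ X (LinearMap.adjoint (Fam S B) X) : ℝ) := real_inner_comm _ _
      _ = 16 * c B := h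
  set M : En := ∑ i, S i * Pm X * S i with hM
  have hms : ∀ B (i : Fin 9), tr (Fam S B * (S i * Pm X * S i))
      = (if i ∈ pad B then (-1:ℝ) else 1) * (inner ℝ X (Fam S B X) : ℝ) := by
    intro B i
    rw [show Fam S B * (S i * Pm X * S i) = (Fam S B * S i * Pm X) * S i by noncomm_ring,
      LinearMap.trace_mul_comm,
      show S i * (Fam S B * S i * Pm X) = (S i * Fam S B * S i) * Pm X by noncomm_ring,
      conj_Fam S hcl i B, smul_mul_assoc, map_smul, hFP B, smul_eq_mul]
  have hFM : ∀ B, tr (Fam S B * M) = lam (pad B) * (inner ℝ X (Fam S B X) : ℝ) := by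
    intro B
    rw [hM, Finset.mul_sum, map_sum, Finset.sum_congr rfl (fun i _ => hms B i),
      ← Finset.sum_mul, lam]
  have hMrep : M = ∑ B, (c B * lam (pad B)) • Fam S B := by
    rw [hM]
    have h1 : ∀ i : Fin 9, S i * Pm X * S i = ∑ B, c B • (S i * Fam S B * S i) := by
      intro i
      rw [show S i * Pm X * S i = S i * (∑ B, c B • Fam S B) * S i by rw [hc],
        Finset.mul_sum, Finset.sum_mul]
      exact Finset.sum_congr rfl fun B _ => by rw [mul_smul_comm, smul_mul_assoc]
    rw [Finset.sum_congr rfl fun i _ => h1 i, Finset.sum_comm]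
    refine Finset.sum_congr rfl fun B _ => ?_
    rw [Finset.sum_congr rfl fun (i : Fin 9) _ => by rw [conj_Fam S hcl i B, smul_smul]]
    rw [← Finset.sum_smul, ← Finset.mul_sum, lam]
  have e1 : ∑ B, c B * (inner ℝ X (Fam S B X) : ℝ) = ‖X‖ ^ 4 := by
    have hA : tr (Pm X * Pm X) = ‖X‖ ^ 4 := by
      rw [trace_mul_Pm, Pm_apply, real_inner_smul_right, real_inner_self_eq_norm_sq]
      ring
    have hB : tr (Pm X * Pm X) = ∑ B, c B * (inner ℝ X (Fam S B X) : ℝ) := by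
      conv_lhs => rw [show Pm X * Pm X = Pm X * (∑ B, c B • Fam S B) by rw [hc]]
      rw [Finset.mul_sum, map_sum]
      exact Finset.sum_congr rfl fun B _ => by rw [mul_smul_comm, map_smul, hPF B, smul_eq_mul]
    rw [← hB, hA]
  have e2 : ∑ B, c B * (lam (pad B) * (inner ℝ X (Fam S B X) : ℝ))
      = ∑ i, (inner ℝ (S i X) X : ℝ) ^ 2 := by
    have hA : tr (M * Pm X) = ∑ i, (inner ℝ (S i X) X : ℝ) ^ 2 := by
      rw [hM, Finset.sum_mul, map_sum]
      refine Finset.sum_congr rfl fun i _ => ?_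
      rw [show S i * Pm X * S i * Pm X = (S i * Pm X * S i) * Pm X from rfl, trace_mul_Pm]
      have happ : (S i * Pm X * S i) X = (inner ℝ X (S i X) : ℝ) • S i X := by
        simp [Module.End.mul_apply]
      rw [happ, real_inner_smul_right, real_inner_comm]
      ring
    have hB : tr (M * Pm X) = ∑ B, c B * (lam (pad B) * (inner ℝ X (Fam S B X) : ℝ)) := by
      conv_lhs => rw [hMrep]
      rw [Finset.sum_mul, map_sum]
      refine Finset.sum_congr rfl fun B _ => ?_
      rw [smul_mul_assoc, map_smul, hFP B, smul_eq_mul]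
      ring
    rw [← hB, hA]
  have e3 : ∑ B, c B * (lam (pad B) * (lam (pad B) * (inner ℝ X (Fam S B X) : ℝ)))
      = 9 * ‖X‖ ^ 4 := by
    have hpair : ∀ i j : Fin 9, tr ((S i * Pm X * S i) * (S j * Pm X * S j))
        = if i = j then ‖X‖ ^ 4 else 0 := by
      intro i j
      rw [show (S i * Pm X * S i) * (S j * Pm X * S j)
          = ((S i * Pm X * S i * S j * Pm X) * S j) by noncomm_ring,
        LinearMap.trace_mul_comm,
        show S j * (S i * Pm X * S i * S j * Pm X)
          = (S j * (S i * Pm X * (S i * S j))) * Pm X by noncomm_ring,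
        trace_mul_Pm]
      have happ : (S j * (S i * Pm X * (S i * S j))) X
          = (inner ℝ X (S i (S j X)) : ℝ) • S j (S i X) := by
        simp [Module.End.mul_apply]
      rw [happ, real_inner_smul_right, inner_SS S hsymm hcl,
        inner_SS S hsymm hcl X j i]
      by_cases hij : i = j
      · subst hij
        norm_num
        ring
      · rw [if_neg hij, if_neg (Ne.symm hij), if_neg hij, mul_zero]
    have hA : tr (M * M) = 9 * ‖X‖ ^ 4 := by
      calc tr (M * M) = ∑ i, ∑ j, tr ((S i * Pm X * S i) * (S j * Pm X * S j)) := by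
            rw [hM, Finset.sum_mul, map_sum]
            exact Finset.sum_congr rfl fun i _ => by rw [Finset.mul_sum, map_sum]
        _ = ∑ _i : Fin 9, ‖X‖ ^ 4 := by
            refine Finset.sum_congr rfl fun i _ => ?_
            rw [Finset.sum_congr rfl fun j _ => hpair i j]
            simp
        _ = 9 * ‖X‖ ^ 4 := by
            rw [Finset.sum_const]
            simp
    have hB : tr (M * M) = ∑ B, c B * (lam (pad B) * (lam (pad B) * (inner ℝ X (Fam S B X) : ℝ))) := by
      conv_lhs => rw [show M * M = (∑ B, (c B * lam (pad B)) • Fam S B) * M by rw [← hMrep]]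
      rw [Finset.sum_mul, map_sum]
      refine Finset.sum_congr rfl fun B _ => ?_
      rw [smul_mul_assoc, map_smul, hFM B, smul_eq_mul]
      ring
    rw [← hB, hA]
  have keyB : ∀ B : Finset (Fin 8), (lam (pad B) ^ 2 + 6 * lam (pad B) - 7)
      * (c B * (inner ℝ X (Fam S B X) : ℝ)) = if B = ∅ then 8 * ‖X‖ ^ 4 else 0 := by
    intro B
    obtain ⟨m, hm⟩ := card_pad_even B
    have hk9 : (pad B).card ≤ 9 := by
      simpa using Finset.card_le_univ (pad B)
    have hBne : (pad B).card ≠ 0 → ¬ B = ∅ := by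
      intro hne hB0
      subst hB0
      rw [pad_empty] at hne
      simp at hne
    have hlam := lam_eq (pad B)
    have hanti : ∀ k : ℕ, (pad B).card = k → Odd (k.choose 2) →
        (inner ℝ X (Fam S B X) : ℝ) = 0 := by
      intro k hk hodd
      have hadj := adjoint_VB S hsymm hcl (pad B)
      rw [hk, Odd.neg_one_pow hodd, neg_one_smul] at hadj
      have h1 : (inner ℝ (LinearMap.adjoint (VB S (pad B)) X) X : ℝ)
          = (inner ℝ X (VB S (pad B) X) : ℝ) := LinearMap.adjoint_inner_left _ _ _
      rw [hadj, LinearMap.neg_apply, inner_neg_left, real_inner_comm] at h1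
      have : (inner ℝ X (VB S (pad B) X) : ℝ) = 0 := by linarith
      rw [Fam]
      exact this
    have hcases : (pad B).card = 0 ∨ (pad B).card = 2 ∨ (pad B).card = 4
        ∨ (pad B).card = 6 ∨ (pad B).card = 8 := by omega
    rcases hcases with h0 | h2 | h4 | h6 | h8
    · have hpadempty : pad B = ∅ := Finset.card_eq_zero.mp h0
      have hBempty : B = ∅ := (pad_eq_empty_iff B).mp hpadempty
      subst hBempty
      rw [if_pos rfl]
      have hfam1 : Fam S ∅ = (1 : En) := by rw [Fam, pad_empty, VB_empty]
      have hdd : (inner ℝ X (Fam S ∅ X) : ℝ) = ‖X‖ ^ 2 := by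
        rw [hfam1, Module.End.one_apply, real_inner_self_eq_norm_sq]
      have hcB := hcd ∅
      rw [hdd] at hcB ⊢
      have hc0 : c ∅ = ‖X‖ ^ 2 / 16 := by linarith
      rw [hc0, hlam, hpadempty, Finset.card_empty]
      push_cast
      ring
    · rw [hanti 2 h2 (by decide), if_neg (hBne (by omega))]
      ring
    · rw [if_neg (hBne (by omega)), hlam, h4]
      push_cast
      ring
    · rw [hanti 6 h6 (by decide), if_neg (hBne (by omega))]
      ring
    · rw [if_neg (hBne (by omega)), hlam, h8]
      push_cast
      ring
  have hsum : ∑ B, (lam (pad B) ^ 2 + 6 * lam (pad B) - 7)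
      * (c B * (inner ℝ X (Fam S B X) : ℝ)) = 8 * ‖X‖ ^ 4 := by
    rw [Finset.sum_congr rfl fun B _ => keyB B,
      Finset.sum_ite_eq' Finset.univ ∅ fun _ => 8 * ‖X‖ ^ 4]
    simp
  have hexpand : ∑ B, (lam (pad B) ^ 2 + 6 * lam (pad B) - 7)
      * (c B * (inner ℝ X (Fam S B X) : ℝ))
      = (∑ B, c B * (lam (pad B) * (lam (pad B) * (inner ℝ X (Fam S B X) : ℝ))))
        + 6 * (∑ B, c B * (lam (pad B) * (inner ℝ X (Fam S B X) : ℝ)))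
        - 7 * (∑ B, c B * (inner ℝ X (Fam S B X) : ℝ)) := by
    rw [Finset.mul_sum, Finset.mul_sum, ← Finset.sum_add_distrib, ← Finset.sum_sub_distrib]
    exact Finset.sum_congr rfl fun B _ => by ring
  rw [hexpand, e1, e2, e3] at hsum
  linarith

end

section
variable (hsymm : ∀ i, LinearMap.adjoint (S i) = S i)
include hsymm

lemma sum_eq (X : E16) :
    ∑ i, (inner ℝ (S i X) X : ℝ) • S i X = (‖X‖ ^ 2 : ℝ) • X := by
  have hq := q_eq S hsymm hcl X
  have h2 : (inner ℝ (∑ i, (inner ℝ (S i X) X : ℝ) • S i X) X : ℝ)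
      = ∑ i, (inner ℝ (S i X) X : ℝ) ^ 2 := by
    rw [sum_inner]
    exact Finset.sum_congr rfl fun i _ => by rw [real_inner_smul_left]; ring
  have h1 : (inner ℝ (∑ i, (inner ℝ (S i X) X : ℝ) • S i X)
      (∑ j, (inner ℝ (S j X) X : ℝ) • S j X) : ℝ)
      = (∑ i, (inner ℝ (S i X) X : ℝ) ^ 2) * ‖X‖ ^ 2 := by
    rw [sum_inner, Finset.sum_mul]
    refine Finset.sum_congr rfl fun i _ => ?_
    rw [real_inner_smul_left, inner_sum]
    have : ∀ j, (inner ℝ (S i X) ((inner ℝ (S j X) X : ℝ) • S j X) : ℝ)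
        = (inner ℝ (S j X) X : ℝ) * (if i = j then ‖X‖ ^ 2 else 0) := by
      intro j
      rw [real_inner_smul_right, hOrtho S hsymm hcl X i j]
    rw [Finset.sum_congr rfl fun j _ => this j]
    simp only [mul_ite, mul_zero]
    rw [Finset.sum_ite_eq Finset.univ i fun j => (inner ℝ (S j X) X : ℝ) * ‖X‖ ^ 2]
    simp only [Finset.mem_univ, if_true]
    ring
  set L := ∑ i, (inner ℝ (S i X) X : ℝ) • S i X with hL
  have hDD : (inner ℝ (L - (‖X‖ ^ 2 : ℝ) • X) (L - (‖X‖ ^ 2 : ℝ) • X) : ℝ) = 0 := by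
    rw [inner_sub_left, inner_sub_right, inner_sub_right, h1, real_inner_smul_right,
      real_inner_smul_left, real_inner_smul_left, real_inner_smul_right,
      real_inner_self_eq_norm_sq, real_inner_comm L X, h2, hq]
    ring
  have hzero : L - (‖X‖ ^ 2 : ℝ) • X = 0 := inner_self_eq_zero.mp hDD
  rwa [sub_eq_zero] at hzero

lemma part1 (X : E16) : X ∈ Submodule.span ℝ (Set.range fun i => S i X) := by
  by_cases hX : X = 0
  · subst hX; exact Submodule.zero_mem _
  have h2 := sum_eq S hsymm hcl X
  have hn : (‖X‖ ^ 2 : ℝ) ≠ 0 := by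
    simpa using hX
  have hXeq : X = (‖X‖ ^ 2 : ℝ)⁻¹ • ∑ i, (inner ℝ (S i X) X : ℝ) • S i X := by
    rw [h2, smul_smul, inv_mul_cancel₀ hn, one_smul]
  have hmem : (∑ i, (inner ℝ (S i X) X : ℝ) • S i X)
      ∈ Submodule.span ℝ (Set.range fun i => S i X) :=
    Submodule.sum_mem _ fun i _ =>
      Submodule.smul_mem _ _ (Submodule.subset_span ⟨i, rfl⟩)
  have hmem2 := Submodule.smul_mem _ ((‖X‖ ^ 2 : ℝ)⁻¹) hmem
  rwa [← hXeq] at hmem2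

lemma part3 (X Y : E16) :
    ∑ i, ((2 * (inner ℝ (S i X) Y : ℝ)) • S i X + (inner ℝ (S i X) X : ℝ) • S i Y)
      = (‖X‖ ^ 2 : ℝ) • Y + (2 * (inner ℝ X Y : ℝ)) • X := by
  have hp := sum_eq S hsymm hcl (X + Y)
  have hm := sum_eq S hsymm hcl (X - Y)
  have hy := sum_eq S hsymm hcl Y
  have comb : (∑ i, (inner ℝ (S i (X + Y)) (X + Y) : ℝ) • S i (X + Y))
      - (∑ i, (inner ℝ (S i (X - Y)) (X - Y) : ℝ) • S i (X - Y))
      - (2 : ℝ) • (∑ i, (inner ℝ (S i Y) Y : ℝ) • S i Y)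
      = (2 : ℝ) • ∑ i, ((2 * (inner ℝ (S i X) Y : ℝ)) • S i X
          + (inner ℝ (S i X) X : ℝ) • S i Y) := by
    rw [Finset.smul_sum, Finset.smul_sum, ← Finset.sum_sub_distrib, ← Finset.sum_sub_distrib]
    refine Finset.sum_congr rfl fun i _ => ?_
    have hSadd : S i (X + Y) = S i X + S i Y := map_add _ _ _
    have hSsub : S i (X - Y) = S i X - S i Y := map_sub _ _ _
    have hYX : (inner ℝ (S i Y) X : ℝ) = (inner ℝ (S i X) Y : ℝ) := by
      rw [inner_S_left S hsymm Y X i, real_inner_comm]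
    rw [hSadd, hSsub, inner_add_left, inner_add_right, inner_add_right,
      inner_sub_left, inner_sub_right, inner_sub_right, hYX]
    module
  rw [hp, hm, hy] at comb
  have hRHS : ((‖X + Y‖ ^ 2 : ℝ)) • (X + Y) - ((‖X - Y‖ ^ 2 : ℝ)) • (X - Y)
      - (2 : ℝ) • ((‖Y‖ ^ 2 : ℝ) • Y)
      = (2 : ℝ) • ((‖X‖ ^ 2 : ℝ) • Y + (2 * (inner ℝ X Y : ℝ)) • X) := by
    rw [norm_add_sq_real, norm_sub_sq_real]
    module
  rw [hRHS] at comb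
  exact smul_right_injective _ (two_ne_zero) comb.symm

end

end

end
end Cl9

/-- Lemma 3(4), first part: for a `Cl⁺(9)`-system on `ℝ¹⁶` and any `X, Y ∈ ℝ¹⁶`:
`X ∈ Span(S₀X,…,S₈X)`, `Σᵢ ⟨SᵢX,X⟩SᵢX = ‖X‖²X`, and
`Σᵢ (2⟨SᵢX,Y⟩SᵢX + ⟨SᵢX,X⟩SᵢY) = ‖X‖²Y + 2⟨X,Y⟩X`. -/
theorem stmt11 (S : Fin 9 → (E16 →ₗ[ℝ] E16))
    (hsymm : ∀ i, LinearMap.adjoint (S i) = S i)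
    (hcl : ∀ i j, S i * S j + S j * S i =
      if i = j then (2 : ℝ) • (1 : E16 →ₗ[ℝ] E16) else 0) :
    (∀ X : E16, X ∈ Submodule.span ℝ (Set.range fun i => S i X)) ∧
    (∀ X : E16, ∑ i, (inner ℝ (S i X) X : ℝ) • S i X = (‖X‖ ^ 2 : ℝ) • X) ∧
    (∀ X Y : E16, ∑ i, ((2 * (inner ℝ (S i X) Y : ℝ)) • S i X + (inner ℝ (S i X) X : ℝ) • S i Y)
      = (‖X‖ ^ 2 : ℝ) • Y + (2 * (inner ℝ X Y : ℝ)) • X) := by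
  exact ⟨fun X => Cl9.part1 S hsymm hcl X, fun X => Cl9.sum_eq S hsymm hcl X,
    fun X Y => Cl9.part3 S hsymm hcl X Y⟩
end

section
/- Let S_0, …, S_8 be a Cl⁺(9)-system on ℝ^16, and let N : ℝ^16 × ℝ^16 → ℝ^16 be a bilinear skew-symmetric map such that ⟨N(X,Y), Z⟩ = 0 whenever w ∈ ℝ^9 is nonzero and X, Y, Z all belong to the ‖w‖-eigenspace of S_w. Then there exists q ∈ ℝ^16 such that for all X, Y: N(X,Y) = Σ_{i=0}^{8} (⟨S_iX, q⟩S_iY − ⟨S_iY, q⟩S_iX) − (⟨X, q⟩Y − ⟨Y, q⟩X). -/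
set_option linter.unusedSectionVars false

namespace Stmt13X
open Finset LinearMap

noncomputable section

abbrev E : Type := EuclideanSpace ℝ (Fin 16)
abbrev L : Type := E →ₗ[ℝ] E

noncomputable def bE : OrthonormalBasis (Fin 16) ℝ E := EuclideanSpace.basisFun (Fin 16) ℝ

lemma symm_notmem {x : Fin 9} {t : Finset (Fin 9)} (hx : x ∉ t) :
    symmDiff {x} t = insert x t := by
  ext y
  simp only [Finset.mem_symmDiff, Finset.mem_singleton, Finset.mem_insert]
  constructor
  · rintro (⟨rfl, _⟩ | ⟨h1, h2⟩) <;> tauto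
  · rintro (rfl | h)
    · exact Or.inl ⟨rfl, hx⟩
    · right; exact ⟨h, fun hy => hx (hy ▸ h)⟩

lemma symm_mem {x : Fin 9} {t : Finset (Fin 9)} (hx : x ∈ t) :
    symmDiff {x} t = t.erase x := by
  ext y
  simp only [Finset.mem_symmDiff, Finset.mem_singleton, Finset.mem_erase]
  constructor
  · rintro (⟨rfl, h⟩ | ⟨h1, h2⟩)
    · exact absurd hx h
    · exact ⟨fun hy => h2 (hy ▸ rfl), h1⟩
  · rintro ⟨h1, h2⟩; right; exact ⟨h2, fun hy => h1 (by cases hy; rfl)⟩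

lemma symm_insert {x a : Fin 9} {t : Finset (Fin 9)} (hax : a ≠ x) (hat : a ∉ t) :
    symmDiff {x} (insert a t) = insert a (symmDiff {x} t) := by
  ext y
  simp only [Finset.mem_symmDiff, Finset.mem_singleton, Finset.mem_insert]
  by_cases hy : y = a
  · subst hy; tauto
  · tauto

lemma foldr_symmDiff (m : List (Fin 9)) (hm : m.Nodup) (t : Finset (Fin 9)) :
    m.foldr (fun x t => symmDiff {x} t) t = symmDiff m.toFinset t := by
  induction m with
  | nil =>
      simp only [List.foldr_nil, List.toFinset_nil]
      ext y; simp [Finset.mem_symmDiff]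
  | cons y m' ih =>
      rcases List.nodup_cons.mp hm with ⟨hym, hm'⟩
      have h1 : symmDiff ({y} : Finset (Fin 9)) m'.toFinset = (y :: m').toFinset := by
        rw [symm_notmem (by simpa using hym)]; simp
      rw [List.foldr_cons, ih hm', ← symmDiff_assoc, h1]

def tr16 (M : L) : ℝ := ∑ β, inner ℝ (M (bE β)) (bE β)

lemma tr16_comm (f g : L) : tr16 (f * g) = tr16 (g * f) := by
  have key : ∀ u v : L, tr16 (u * v) =
      ∑ β, ∑ α, (inner ℝ (bE α) (v (bE β)) : ℝ) * inner ℝ (u (bE α)) (bE β) := by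
    intro u v
    unfold tr16
    refine Finset.sum_congr rfl fun β _ => ?_
    have h1 : (u * v) (bE β) = u (v (bE β)) := rfl
    rw [h1]
    conv_lhs => rw [← bE.sum_repr' (v (bE β))]
    rw [map_sum, sum_inner]
    refine Finset.sum_congr rfl fun α _ => ?_
    rw [map_smul, real_inner_smul_left]
  rw [key, key, Finset.sum_comm]
  refine Finset.sum_congr rfl fun β _ => Finset.sum_congr rfl fun α _ => ?_
  rw [real_inner_comm (bE β), real_inner_comm (f (bE β))]
  ring

@[simp] lemma tr16_one : tr16 (1 : L) = 16 := by
  have h : ∀ β : Fin 16, (inner ℝ ((1 : L) (bE β)) (bE β) : ℝ) = 1 := by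
    intro β
    rw [Module.End.one_apply, real_inner_self_eq_norm_mul_norm, bE.orthonormal.1 β]
    norm_num
  unfold tr16
  rw [Finset.sum_congr rfl fun β _ => h β]
  simp

lemma tr16_neg (f : L) : tr16 (-f) = - tr16 f := by
  simp [tr16]

lemma tr16_smul (c : ℝ) (f : L) : tr16 (c • f) = c * tr16 f := by
  simp [tr16, inner_smul_left, Finset.mul_sum]



variable (S : Fin 9 → L)
def W (l : List (Fin 9)) : L := (l.map S).prod
@[simp] lemma W_nil : W S [] = 1 := rfl
@[simp] lemma W_cons (a : Fin 9) (l : List (Fin 9)) : W S (a :: l) = S a * W S l := by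
  simp [W, List.prod_cons]
lemma W_append (l₁ l₂ : List (Fin 9)) : W S (l₁ ++ l₂) = W S l₁ * W S l₂ := by
  simp [W, List.prod_append]

variable (hsq : ∀ i, S i * S i = 1)
    (hanti : ∀ i j, i ≠ j → S i * S j = -(S j * S i))
    (hadj : ∀ i, LinearMap.adjoint (S i) = S i)

include hsq hanti

lemma mulW_notmem (x : Fin 9) (l : List (Fin 9)) (hx : x ∉ l) :
    S x * W S l = ((-1 : ℝ) ^ l.length) • (W S l * S x) := by
  induction l with
  | nil => simp
  | cons a r ih =>
      have hxa : x ≠ a := by simp at hx; tauto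
      have hxr : x ∉ r := by simp at hx; tauto
      rw [W_cons, ← mul_assoc, hanti x a hxa, neg_mul, mul_assoc, ih hxr]
      simp only [mul_smul_comm, List.length_cons, pow_succ, mul_assoc]
      module

lemma trW_zero (l : List (Fin 9)) (hnd : l.Nodup) (hne : l ≠ []) (hlen : l.length ≤ 8) :
    tr16 (W S l) = 0 := by
  rcases Nat.even_or_odd l.length with he | ho
  · -- even case : l = x :: r with |r| odd
    match l, hne with
    | x :: r, _ =>
      have hxr : x ∉ r := by simp at hnd; tauto
      have hnd' : r.Nodup := by simp at hnd; tauto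
      have hodd : Odd r.length := by
        rcases he with ⟨k, hk⟩
        simp only [List.length_cons] at hk
        exact ⟨k - 1, by omega⟩
      have h1 : S x * W S r = -(W S r * S x) := by
        rw [mulW_notmem S hsq hanti x r hxr, Odd.neg_one_pow hodd]; simp
      have h2 : tr16 (S x * W S r) = tr16 (W S r * S x) := tr16_comm _ _
      have h3 : tr16 (S x * W S r) = - tr16 (W S r * S x) := by
        rw [h1, tr16_neg]
      rw [W_cons]
      linarith [h2, h3]
  · -- odd case: pick j ∉ l
    have hcard : (l.toFinsetᶜ : Finset (Fin 9)).Nonempty := by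
      rw [← Finset.card_pos, Finset.card_compl]
      have h1 : l.toFinset.card = l.length := List.toFinset_card_of_nodup hnd
      have h2 : Fintype.card (Fin 9) = 9 := Fintype.card_fin 9
      omega
    obtain ⟨j, hj⟩ := hcard
    have hjl : j ∉ l := by
      rw [Finset.mem_compl, List.mem_toFinset] at hj; exact hj
    have h1 : S j * W S l = -(W S l * S j) := by
      rw [mulW_notmem S hsq hanti j l hjl, Odd.neg_one_pow ho]; simp
    have e1 : tr16 (S j * (W S l * S j)) = tr16 ((W S l * S j) * S j) := tr16_comm _ _
    have e2 : (W S l * S j) * S j = W S l := by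
      rw [mul_assoc, hsq j, mul_one]
    have e3 : S j * (W S l * S j) = -(W S l) := by
      rw [← mul_assoc, h1, neg_mul, mul_assoc, hsq j, mul_one]
    rw [e2, e3, tr16_neg] at e1
    linarith


omit hsq hanti in
include hadj in
lemma adjW (l : List (Fin 9)) : LinearMap.adjoint (W S l) = W S l.reverse := by
  induction l with
  | nil =>
      show LinearMap.adjoint (1 : L) = 1
      rw [← LinearMap.star_eq_adjoint]; exact star_one L
  | cons a r ih =>
      have h1 : S a * W S r = S a ∘ₗ W S r := rfl
      rw [W_cons, h1, LinearMap.adjoint_comp, List.reverse_cons, W_append, ih, hadj]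
      have h2 : W S [a] = S a := by simp
      rw [h2]; rfl

lemma revW (l : List (Fin 9)) : W S l.reverse * W S l = 1 := by
  induction l with
  | nil => simp
  | cons a r ih =>
      rw [List.reverse_cons, W_append, W_cons, W_cons, W_nil, mul_one, mul_assoc,
        ← mul_assoc (S a), hsq a, one_mul, ih]

-- symmDiff helpers
-- single left multiplication into a sorted word
lemma mulW_sorted (x : Fin 9) (l : List (Fin 9)) (hl : l.Pairwise (· < ·)) :
    ∃ (ε : ℝ) (l' : List (Fin 9)), (ε = 1 ∨ ε = -1) ∧ l'.Pairwise (· < ·) ∧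
      l'.toFinset = symmDiff {x} l.toFinset ∧ S x * W S l = ε • W S l' := by
  induction l with
  | nil =>
      refine ⟨1, [x], Or.inl rfl, by simp, ?_, by simp⟩
      rw [List.toFinset_nil, symm_notmem (Finset.notMem_empty x)]
      simp
  | cons a r ih =>
      rw [List.pairwise_cons] at hl
      obtain ⟨har, hr⟩ := hl
      have hanr : a ∉ r := fun h => lt_irrefl a (har a h)
      rcases lt_trichotomy x a with hxa | hxa | hxa
      · refine ⟨1, x :: a :: r, Or.inl rfl, ?_, ?_, by simp⟩
        · rw [List.pairwise_cons]
          exact ⟨fun b hb => by rcases List.mem_cons.mp hb with rfl | hb; exact hxa; exact hxa.trans (har b hb),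
            List.pairwise_cons.mpr ⟨har, hr⟩⟩
        · rw [List.toFinset_cons, symm_notmem]
          simp only [List.toFinset_cons]
          intro h
          rcases Finset.mem_insert.mp h with rfl | h
          · exact lt_irrefl x hxa
          · exact lt_irrefl x (hxa.trans (har x (List.mem_toFinset.mp h)))
      · subst hxa
        refine ⟨1, r, Or.inl rfl, hr, ?_, ?_⟩
        · rw [List.toFinset_cons, symm_mem (Finset.mem_insert_self x _),
            Finset.erase_insert (by simpa using hanr)]
        · rw [W_cons, ← mul_assoc, hsq x, one_mul, one_smul]
      · obtain ⟨ε, r', hε, hs', hf', he'⟩ := ih hr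
        refine ⟨-ε, a :: r', by rcases hε with rfl | rfl; right; rfl; left; norm_num, ?_, ?_, ?_⟩
        · rw [List.pairwise_cons]
          refine ⟨fun b hb => ?_, hs'⟩
          have : b ∈ r'.toFinset := List.mem_toFinset.mpr hb
          rw [hf'] at this
          rcases Finset.mem_symmDiff.mp this with ⟨h1, _⟩ | ⟨h1, _⟩
          · rw [Finset.mem_singleton.mp h1]; exact hxa
          · exact har b (List.mem_toFinset.mp h1)
        · rw [List.toFinset_cons, List.toFinset_cons, hf']
          exact (symm_insert (ne_of_lt hxa) (by simpa using hanr)).symm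
        · rw [W_cons, ← mul_assoc, hanti x a (ne_of_gt hxa), neg_mul, mul_assoc, he',
            mul_smul_comm, ← W_cons]
          simp

lemma Wmul_sorted (m : List (Fin 9)) (l : List (Fin 9)) (hl : l.Pairwise (· < ·)) :
    ∃ (ε : ℝ) (l' : List (Fin 9)), (ε = 1 ∨ ε = -1) ∧ l'.Pairwise (· < ·) ∧
      l'.toFinset = m.foldr (fun x t => symmDiff {x} t) l.toFinset ∧
      W S m * W S l = ε • W S l' := by
  induction m with
  | nil => exact ⟨1, l, Or.inl rfl, hl, rfl, by simp⟩
  | cons y m' ih =>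
      obtain ⟨ε₁, l₁, hε₁, hs₁, hf₁, he₁⟩ := ih
      obtain ⟨ε₂, l₂, hε₂, hs₂, hf₂, he₂⟩ := mulW_sorted S hsq hanti y l₁ hs₁
      refine ⟨ε₁ * ε₂, l₂, ?_, hs₂, ?_, ?_⟩
      · rcases hε₁ with rfl | rfl <;> rcases hε₂ with rfl | rfl <;> simp
      · rw [hf₂, hf₁]; rfl
      · rw [W_cons, mul_assoc, he₁, mul_smul_comm, he₂, smul_smul]



omit hsq hanti

lemma tr16_sum {ι : Type*} (s : Finset ι) (f : ι → L) :
    tr16 (∑ i ∈ s, f i) = ∑ i ∈ s, tr16 (f i) := by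
  classical
  induction s using Finset.induction_on with
  | empty => simp [tr16]
  | @insert x s hx ih =>
      rw [Finset.sum_insert hx, Finset.sum_insert hx, ← ih]
      simp [tr16, inner_add_left, Finset.sum_add_distrib]

-- ### Part C : the 120-element family and spanning of skew endomorphisms

def Idx : Type :=
  {p : Fin 9 × Fin 9 // p.1 < p.2} ⊕ {t : Fin 9 × Fin 9 × Fin 9 // t.1 < t.2.1 ∧ t.2.1 < t.2.2}

instance : Fintype Idx := by unfold Idx; infer_instance
instance : DecidableEq Idx := by unfold Idx; infer_instance

def lst : Idx → List (Fin 9)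
  | .inl p => [p.1.1, p.1.2]
  | .inr t => [t.1.1, t.1.2.1, t.1.2.2]

lemma lst_sorted (G : Idx) : (lst G).Pairwise (· < ·) := by
  rcases G with ⟨⟨i,j⟩,h⟩ | ⟨⟨i,j,k⟩,h⟩ <;> simp [lst, List.pairwise_cons] at *
  · exact h
  · exact ⟨⟨h.1, h.1.trans h.2⟩, h.2⟩

lemma lst_nodup (G : Idx) : (lst G).Nodup := (lst_sorted G).nodup

lemma lst_len (G : Idx) : (lst G).length = 2 ∨ (lst G).length = 3 := by
  rcases G with ⟨⟨i,j⟩,h⟩ | ⟨⟨i,j,k⟩,h⟩ <;> simp [lst]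

lemma lst_inj : Function.Injective lst := by
  rintro (⟨⟨i,j⟩,h⟩ | ⟨⟨i,j,k⟩,h⟩) (⟨⟨i',j'⟩,h'⟩ | ⟨⟨i',j',k'⟩,h'⟩) hGF <;>
    simp [lst] at hGF
  · obtain ⟨rfl, rfl⟩ := hGF; rfl
  · obtain ⟨rfl, rfl, rfl⟩ := hGF; rfl

lemma lst_toFinset_inj {G F : Idx} (h : (lst G).toFinset = (lst F).toFinset) : G = F := by
  apply lst_inj
  apply List.Perm.eq_of_pairwise (fun a b _ _ h1 h2 => absurd (h1.trans h2) (lt_irrefl a)) (lst_sorted G) (lst_sorted F)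
  exact List.perm_of_nodup_nodup_toFinset_eq (lst_nodup G) (lst_nodup F) h

def vfam : Idx → L := fun G => W S (lst G)

section
include hsq hanti hadj

lemma orth (G F : Idx) :
    tr16 (LinearMap.adjoint (vfam S G) * vfam S F) = if G = F then 16 else 0 := by
  simp only [vfam]
  rw [adjW S hadj]
  by_cases hGF : G = F
  · subst hGF
    rw [if_pos rfl, revW S hsq hanti (lst G), tr16_one]
  · rw [if_neg hGF]
    obtain ⟨ε, l', hε, hs', hf', he'⟩ :=
      Wmul_sorted S hsq hanti (lst G).reverse (lst F) (lst_sorted F)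
    rw [foldr_symmDiff _ (by simpa using lst_nodup G), List.toFinset_reverse] at hf'
    have hne : (lst G).toFinset ≠ (lst F).toFinset := fun hh => hGF (lst_toFinset_inj hh)
    have hsd : symmDiff (lst G).toFinset (lst F).toFinset ≠ ∅ := by
      intro hh
      exact hne (symmDiff_eq_bot.mp hh)
    have hl'nd : l'.Nodup := hs'.nodup
    have hl'ne : l' ≠ [] := by
      intro hh; subst hh; simp at hf'; exact hsd hf'.symm
    have hl'len : l'.length ≤ 8 := by
      have h1 : l'.toFinset.card = l'.length := List.toFinset_card_of_nodup hl'nd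
      have h2 : (symmDiff (lst G).toFinset (lst F).toFinset).card ≤
          (lst G).toFinset.card + (lst F).toFinset.card := by
        calc (symmDiff (lst G).toFinset (lst F).toFinset).card
            ≤ ((lst G).toFinset ∪ (lst F).toFinset).card :=
              Finset.card_le_card symmDiff_le_sup
          _ ≤ _ := Finset.card_union_le _ _
      have h3 : (lst G).toFinset.card ≤ 3 := by
        rw [List.toFinset_card_of_nodup (lst_nodup G)]
        rcases lst_len G with h | h <;> omega
      have h4 : (lst F).toFinset.card ≤ 3 := by
        rw [List.toFinset_card_of_nodup (lst_nodup F)]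
        rcases lst_len F with h | h <;> omega
      rw [hf'] at h1
      omega
    rw [he', tr16_smul, trW_zero S hsq hanti l' hl'nd hl'ne hl'len, mul_zero]

lemma vfam_skew (G : Idx) : LinearMap.adjoint (vfam S G) = -(vfam S G) := by
  simp only [vfam]
  rw [adjW S hadj]
  rcases G with ⟨⟨i,j⟩,h⟩ | ⟨⟨i,j,k⟩,h⟩
  · show W S [j, i] = -W S [i, j]
    simp only [W_cons, W_nil, mul_one]
    rw [hanti j i (ne_of_gt h)]
  · show W S [k, j, i] = -W S [i, j, k]
    simp only [W_cons, W_nil, mul_one]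
    have hij : i ≠ j := ne_of_lt h.1
    have hjk : j ≠ k := ne_of_lt h.2
    have hik : i ≠ k := ne_of_lt (h.1.trans h.2)
    rw [hanti j i hij.symm, mul_neg, ← mul_assoc, hanti k i hik.symm, neg_mul, neg_neg,
      mul_assoc, hanti k j hjk.symm, mul_neg]


lemma vfam_indep : LinearIndependent ℝ (vfam S) := by
  rw [Fintype.linearIndependent_iff]
  intro g hg G
  have h0 : tr16 (LinearMap.adjoint (vfam S G) * (∑ F, g F • vfam S F)) = 0 := by
    rw [hg]; simp [tr16]
  rw [Finset.mul_sum] at h0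
  have h1 : ∀ F : Idx, LinearMap.adjoint (vfam S G) * (g F • vfam S F)
      = g F • (LinearMap.adjoint (vfam S G) * vfam S F) := fun F => mul_smul_comm _ _ _
  simp only [h1] at h0
  rw [tr16_sum] at h0
  simp only [tr16_smul] at h0
  have h2 : ∀ F : Idx, g F * tr16 (LinearMap.adjoint (vfam S G) * vfam S F)
      = if G = F then g F * 16 else 0 := by
    intro F
    rw [orth S hsq hanti hadj G F]
    by_cases h : G = F <;> simp [h]
  rw [Finset.sum_congr rfl (fun F _ => h2 F), Finset.sum_ite_eq] at h0
  simp at h0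
  linarith

end

-- skew submodule
def Ksub : Submodule ℝ L where
  carrier := {M | LinearMap.adjoint M = -M}
  add_mem' := by
    intro a b ha hb
    simp only [Set.mem_setOf_eq] at *
    rw [← LinearMap.star_eq_adjoint] at *
    rw [star_add, ha, hb, neg_add]
  zero_mem' := by
    simp only [Set.mem_setOf_eq]
    rw [← LinearMap.star_eq_adjoint, star_zero, neg_zero]
  smul_mem' := by
    intro c M hM
    simp only [Set.mem_setOf_eq] at *
    rw [← LinearMap.star_eq_adjoint] at *
    rw [star_smul, hM]
    simp

def kappa : Type := {p : Fin 16 × Fin 16 // p.1 < p.2}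
instance : Fintype kappa := by unfold kappa; infer_instance

set_option maxRecDepth 20000 in
lemma card_kappa : Fintype.card kappa = 120 := by decide

set_option maxRecDepth 20000 in
lemma card_Idx : Fintype.card Idx = 120 := by
  rw [show Fintype.card Idx = _ + _ from Fintype.card_sum]
  have h1 : Fintype.card {p : Fin 9 × Fin 9 // p.1 < p.2} = 36 := by decide
  have h2 : Fintype.card {t : Fin 9 × Fin 9 × Fin 9 // t.1 < t.2.1 ∧ t.2.1 < t.2.2} = 84 := by
    decide
  omega

-- injection of Ksub into upper-triangular coordinates
def Psi : Ksub →ₗ[ℝ] (kappa → ℝ) where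
  toFun M := fun p => inner ℝ ((M : L) (bE p.1.2)) (bE p.1.1)
  map_add' := by intro M N; funext p; simp [inner_add_left]
  map_smul' := by intro c M; funext p; simp [inner_smul_left]

lemma vec_eq_zero (x : E) (h : ∀ δ : Fin 16, (inner ℝ x (bE δ) : ℝ) = 0) : x = 0 := by
  have h1 : x = ∑ δ, (inner ℝ (bE δ) x : ℝ) • bE δ := (bE.sum_repr' x).symm
  rw [h1]
  refine Finset.sum_eq_zero fun δ _ => ?_
  rw [real_inner_comm, h δ, zero_smul]

lemma Psi_inj : Function.Injective Psi := by
  rw [injective_iff_map_eq_zero]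
  intro M hM
  have hskew : LinearMap.adjoint (M : L) = -(M : L) := M.2
  have hme : ∀ γ δ : Fin 16, (inner ℝ ((M : L) (bE γ)) (bE δ) : ℝ) = 0 := by
    have key : ∀ γ δ : Fin 16, γ < δ → (inner ℝ ((M : L) (bE δ)) (bE γ) : ℝ) = 0 := by
      intro γ δ h
      have := congrFun hM ⟨(γ, δ), h⟩
      exact this
    have hsk : ∀ γ δ : Fin 16, (inner ℝ ((M : L) (bE γ)) (bE δ) : ℝ)
        = -(inner ℝ ((M : L) (bE δ)) (bE γ) : ℝ) := by
      intro γ δ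
      have h1 : (inner ℝ ((M : L) (bE γ)) (bE δ) : ℝ) = inner ℝ (bE γ) ((LinearMap.adjoint (M : L)) (bE δ)) := by
        rw [LinearMap.adjoint_inner_right]
      rw [h1, hskew]
      simp only [LinearMap.neg_apply, inner_neg_right]
      rw [real_inner_comm]
    intro γ δ
    rcases lt_trichotomy γ δ with h | h | h
    · rw [hsk, key γ δ h, neg_zero]
    · subst h
      have := hsk γ γ
      linarith
    · exact key δ γ h
  have hz : ∀ γ, (M : L) (bE γ) = 0 := by
    intro γ
    exact vec_eq_zero _ (fun δ => hme γ δ)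
  apply Subtype.ext
  apply LinearMap.ext
  intro x
  have h1 : x = ∑ δ, (inner ℝ (bE δ) x : ℝ) • bE δ := (bE.sum_repr' x).symm
  rw [h1, map_sum]
  simp only [map_smul, hz, smul_zero]
  simp


-- ### Part D : contractions

variable (N : E →ₗ[ℝ] E →ₗ[ℝ] E)

def uu (P : L) : E := ∑ β, N (bE β) (P (bE β))

lemma uu_neg (P : L) : uu N (-P) = -(uu N P) := by
  unfold uu
  rw [← Finset.sum_neg_distrib]
  refine Finset.sum_congr rfl fun β _ => ?_
  rw [LinearMap.neg_apply, map_neg]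

-- base contraction
lemma contr_base (B : L) (w : E) : ∑ β, (inner ℝ (bE β) w : ℝ) • B (bE β) = B w := by
  have h1 : ∑ β, (inner ℝ (bE β) w : ℝ) • B (bE β) = B (∑ β, (inner ℝ (bE β) w : ℝ) • bE β) := by
    rw [map_sum]
    exact Finset.sum_congr rfl fun β _ => (map_smul B _ _).symm
  rw [h1, bE.sum_repr' w]

lemma contr (A B : L) (v : E) :
    ∑ β, (inner ℝ (A (bE β)) v : ℝ) • B (bE β) = B (LinearMap.adjoint A v) := by
  rw [← contr_base B (LinearMap.adjoint A v)]
  refine Finset.sum_congr rfl fun β _ => ?_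
  rw [LinearMap.adjoint_inner_right]

lemma sumN_swap (f g : L) :
    ∑ β, N (f (bE β)) (g (bE β)) = ∑ α, N (bE α) (g ((LinearMap.adjoint f) (bE α))) := by
  have step1 : ∀ β, N (f (bE β)) (g (bE β))
      = ∑ α, (inner ℝ (bE α) (f (bE β)) : ℝ) • N (bE α) (g (bE β)) := by
    intro β
    conv_lhs => rw [← bE.sum_repr' (f (bE β))]
    rw [map_sum, LinearMap.sum_apply]
    exact Finset.sum_congr rfl fun α _ => by rw [map_smul, LinearMap.smul_apply]
  rw [Finset.sum_congr rfl fun β _ => step1 β, Finset.sum_comm]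
  refine Finset.sum_congr rfl fun α _ => ?_
  have step2 : ∀ β, (inner ℝ (bE α) (f (bE β)) : ℝ) • N (bE α) (g (bE β))
      = (inner ℝ (bE β) ((LinearMap.adjoint f) (bE α)) : ℝ) • N (bE α) (g (bE β)) := by
    intro β
    congr 1
    rw [LinearMap.adjoint_inner_right]
    exact real_inner_comm _ _
  rw [Finset.sum_congr rfl fun β _ => step2 β]
  have step3 : ∑ β, (inner ℝ (bE β) ((LinearMap.adjoint f) (bE α)) : ℝ) • N (bE α) (g (bE β))
      = N (bE α) (g (∑ β, (inner ℝ (bE β) ((LinearMap.adjoint f) (bE α)) : ℝ) • bE β)) := by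
    rw [map_sum, map_sum]
    exact Finset.sum_congr rfl fun β _ => by rw [map_smul, map_smul]
  rw [step3, bE.sum_repr']

-- ### word lemmas
section
include hsq hanti

lemma swapL (A : L) {i j : Fin 9} (h : i ≠ j) : A * S i * S j = -(A * S j * S i) := by
  rw [mul_assoc, hanti i j h, mul_neg, mul_assoc]

lemma sqL (A : L) (i : Fin 9) : A * S i * S i = A := by
  rw [mul_assoc, hsq i, mul_one]

lemma word_comm2 (i j m : Fin 9) (hmi : m ≠ i) (hmj : m ≠ j) :
    S m * (S i * S j) = (S i * S j) * S m := by
  simp only [← mul_assoc]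
  rw [hanti m i hmi, neg_mul, swapL S hsq hanti (S i) hmj, neg_neg]

lemma word_conj2 (i j m : Fin 9) (hmi : m ≠ i) (hmj : m ≠ j) :
    S m * (S i * S j) * S m = S i * S j := by
  rw [word_comm2 S hsq hanti i j m hmi hmj, mul_assoc, hsq m, mul_one]

lemma word_sq2 (i j : Fin 9) (hij : i ≠ j) :
    (S i * S j) * (S i * S j) = -1 := by
  simp only [← mul_assoc]
  rw [swapL S hsq hanti (S i) (Ne.symm hij), neg_mul, hsq i, one_mul, hsq j]

lemma word_conj2i (i j : Fin 9) (hij : i ≠ j) :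
    S i * (S i * S j) * S i = -(S i * S j) := by
  simp only [← mul_assoc]
  rw [hsq i, one_mul, hanti j i (Ne.symm hij)]

lemma word_conj2j (i j : Fin 9) (hij : i ≠ j) :
    S j * (S i * S j) * S j = -(S i * S j) := by
  simp only [← mul_assoc]
  rw [sqL S hsq hanti (S j * S i) j, hanti j i (Ne.symm hij)]

lemma word_cycl3 (i j m : Fin 9) (hij : i ≠ j) (him : i ≠ m) :
    S j * S m * S i = (S i * S j) * S m := by
  rw [swapL S hsq hanti (S j) (Ne.symm him), hanti j i (Ne.symm hij)]
  simp only [neg_mul, neg_neg]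

lemma word_jmim (i j m : Fin 9) (him : i ≠ m) :
    S j * S m * S i * S m = -(S j * S i) := by
  rw [swapL S hsq hanti (S j * S m) him, sqL S hsq hanti (S j) m]

lemma word_conj3_out (i j m l : Fin 9) (h1 : l ≠ i) (h2 : l ≠ j) (h3 : l ≠ m) :
    S l * (S i * S j * S m) * S l = -(S i * S j * S m) := by
  simp only [← mul_assoc]
  rw [swapL S hsq hanti (S l * S i * S j) (Ne.symm h3)]
  rw [swapL S hsq hanti (S l * S i) (Ne.symm h2)]
  simp only [neg_mul, mul_neg, neg_neg]
  rw [swapL S hsq hanti (S l) (Ne.symm h1)]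
  simp only [neg_mul, mul_neg, neg_neg]
  rw [hsq l, one_mul]

lemma word_conj3_i (i j m : Fin 9) (hij : i ≠ j) (him : i ≠ m) :
    S i * (S i * S j * S m) * S i = S i * S j * S m := by
  simp only [← mul_assoc]
  rw [hsq i, one_mul, swapL S hsq hanti (S j) (Ne.symm him), hanti j i (Ne.symm hij)]
  simp only [neg_mul, neg_neg]

lemma word_conj3_j (i j m : Fin 9) (hij : i ≠ j) (hjm : j ≠ m) :
    S j * (S i * S j * S m) * S j = S i * S j * S m := by
  simp only [← mul_assoc]
  rw [hanti j i (Ne.symm hij)]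
  simp only [neg_mul, mul_neg, neg_neg]
  rw [sqL S hsq hanti (S i) j, swapL S hsq hanti (S i) (Ne.symm hjm)]
  simp only [neg_mul, neg_neg]

lemma word_conj3_m (i j m : Fin 9) (him : i ≠ m) (hjm : j ≠ m) :
    S m * (S i * S j * S m) * S m = S i * S j * S m := by
  simp only [← mul_assoc]
  rw [sqL S hsq hanti (S m * S i * S j) m, hanti m i (Ne.symm him)]
  simp only [neg_mul, mul_neg, neg_neg]
  rw [swapL S hsq hanti (S i) (Ne.symm hjm)]
  simp only [neg_mul, neg_neg]

end


-- ### Part E : Lambda sums, adjoint signs, spanning conclusion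

section
include hsq hanti hadj

lemma adj_pair (i j : Fin 9) (hij : i ≠ j) :
    LinearMap.adjoint (S i * S j) = -(S i * S j) := by
  rw [← LinearMap.star_eq_adjoint, star_mul, LinearMap.star_eq_adjoint,
    LinearMap.star_eq_adjoint, hadj, hadj, hanti j i (Ne.symm hij)]

lemma adj_triple (i j m : Fin 9) (hij : i ≠ j) (him : i ≠ m) (hjm : j ≠ m) :
    LinearMap.adjoint (S i * S j * S m) = -(S i * S j * S m) := by
  rw [← LinearMap.star_eq_adjoint, star_mul, star_mul, LinearMap.star_eq_adjoint,
    LinearMap.star_eq_adjoint, LinearMap.star_eq_adjoint, hadj, hadj, hadj]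
  simp only [← mul_assoc]
  rw [hanti m j (Ne.symm hjm), neg_mul, swapL S hsq hanti (S j) (Ne.symm him)]
  simp only [neg_mul, mul_neg, neg_neg]
  rw [hanti j i (Ne.symm hij)]
  simp only [neg_mul, mul_neg, neg_neg]

end

section
include hsq hanti

lemma Lambda_pair (i j : Fin 9) (hij : i ≠ j) :
    ∑ l, S l * (S i * S j) * S l = (5 : ℝ) • (S i * S j) := by
  classical
  have hjmem : j ∈ Finset.univ.erase i := Finset.mem_erase.mpr ⟨Ne.symm hij, Finset.mem_univ j⟩
  rw [← Finset.sum_erase_add _ _ (Finset.mem_univ i), ← Finset.sum_erase_add _ _ hjmem]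
  have hrest : ∀ l ∈ (Finset.univ.erase i).erase j, S l * (S i * S j) * S l = S i * S j := by
    intro l hl
    obtain ⟨hlj, hli'⟩ := Finset.mem_erase.mp hl
    obtain ⟨hli, _⟩ := Finset.mem_erase.mp hli'
    exact word_conj2 S hsq hanti i j l hli hlj
  rw [Finset.sum_congr rfl hrest, Finset.sum_const]
  have hcard : ((Finset.univ.erase i).erase j).card = 7 := by
    rw [Finset.card_erase_of_mem hjmem, Finset.card_erase_of_mem (Finset.mem_univ i)]
    simp
  rw [hcard, word_conj2j S hsq hanti i j hij, word_conj2i S hsq hanti i j hij]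
  have : (7 : ℕ) • (S i * S j) = (7 : ℝ) • (S i * S j) := (Nat.cast_smul_eq_nsmul ℝ 7 _).symm
  rw [this]
  module

lemma Lambda_triple (i j m : Fin 9) (hij : i ≠ j) (him : i ≠ m) (hjm : j ≠ m) :
    ∑ l, S l * (S i * S j * S m) * S l = (-3 : ℝ) • (S i * S j * S m) := by
  classical
  have hjmem : j ∈ Finset.univ.erase i := Finset.mem_erase.mpr ⟨Ne.symm hij, Finset.mem_univ j⟩
  have hmmem : m ∈ (Finset.univ.erase i).erase j :=
    Finset.mem_erase.mpr ⟨Ne.symm hjm, Finset.mem_erase.mpr ⟨Ne.symm him, Finset.mem_univ m⟩⟩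
  rw [← Finset.sum_erase_add _ _ (Finset.mem_univ i), ← Finset.sum_erase_add _ _ hjmem,
    ← Finset.sum_erase_add _ _ hmmem]
  have hrest : ∀ l ∈ ((Finset.univ.erase i).erase j).erase m,
      S l * (S i * S j * S m) * S l = -(S i * S j * S m) := by
    intro l hl
    obtain ⟨hlm, hl'⟩ := Finset.mem_erase.mp hl
    obtain ⟨hlj, hl''⟩ := Finset.mem_erase.mp hl'
    obtain ⟨hli, _⟩ := Finset.mem_erase.mp hl''
    exact word_conj3_out S hsq hanti i j m l hli hlj hlm
  rw [Finset.sum_congr rfl hrest, Finset.sum_const]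
  have hcard : (((Finset.univ.erase i).erase j).erase m).card = 6 := by
    rw [Finset.card_erase_of_mem hmmem, Finset.card_erase_of_mem hjmem,
      Finset.card_erase_of_mem (Finset.mem_univ i)]
    simp
  rw [hcard, word_conj3_m S hsq hanti i j m him hjm, word_conj3_j S hsq hanti i j m hij hjm,
    word_conj3_i S hsq hanti i j m hij him]
  have : (6 : ℕ) • (-(S i * S j * S m)) = (6 : ℝ) • (-(S i * S j * S m)) :=
    (Nat.cast_smul_eq_nsmul ℝ 6 _).symm
  rw [this]
  module

end

lemma finrank_K_le : Module.finrank ℝ Ksub ≤ 120 := by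
  have h := LinearMap.finrank_le_finrank_of_injective Psi_inj
  rw [Module.finrank_pi ℝ] at h
  rw [card_kappa] at h
  exact h

section
include hsq hanti hadj

lemma span_vfam_eq : Submodule.span ℝ (Set.range (vfam S)) = Ksub := by
  have hle : Submodule.span ℝ (Set.range (vfam S)) ≤ Ksub := by
    rw [Submodule.span_le]
    rintro _ ⟨G, rfl⟩
    exact vfam_skew S hsq hanti hadj G
  have h1 : Module.finrank ℝ (Submodule.span ℝ (Set.range (vfam S))) = 120 := by
    rw [finrank_span_eq_card (vfam_indep S hsq hanti hadj), card_Idx]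
  exact Submodule.eq_of_le_of_finrank_le hle (by rw [h1]; exact finrank_K_le)

lemma vanish (M : L) (hMskew : LinearMap.adjoint M = -M)
    (hc : ∀ G : Idx, tr16 (LinearMap.adjoint (vfam S G) * M) = 0) : M = 0 := by
  have hmem : M ∈ Submodule.span ℝ (Set.range (vfam S)) := by
    rw [span_vfam_eq S hsq hanti hadj]
    exact hMskew
  obtain ⟨c, hcM⟩ := (Submodule.mem_span_range_iff_exists_fun ℝ).mp hmem
  have hzero : ∀ G : Idx, c G = 0 := by
    intro G
    have h0 := hc G
    rw [← hcM, Finset.mul_sum] at h0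
    have h1 : ∀ F : Idx, LinearMap.adjoint (vfam S G) * (c F • vfam S F)
        = c F • (LinearMap.adjoint (vfam S G) * vfam S F) := fun F => mul_smul_comm _ _ _
    simp only [h1] at h0
    rw [tr16_sum] at h0
    simp only [tr16_smul] at h0
    have h2 : ∀ F : Idx, c F * tr16 (LinearMap.adjoint (vfam S G) * vfam S F)
        = if G = F then c F * 16 else 0 := by
      intro F
      rw [orth S hsq hanti hadj G F]
      by_cases h : G = F <;> simp [h]
    rw [Finset.sum_congr rfl (fun F _ => h2 F), Finset.sum_ite_eq] at h0
    simp at h0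
    linarith
  rw [← hcM]
  rw [Finset.sum_congr rfl (fun F _ => by rw [hzero F, zero_smul])]
  simp

end


-- ### Part F : the model map Phi

variable (q : E)

def PhiM : E →ₗ[ℝ] E →ₗ[ℝ] E :=
  LinearMap.mk₂ ℝ
    (fun X Y => (∑ i, ((inner ℝ (S i X) q : ℝ) • S i Y - (inner ℝ (S i Y) q : ℝ) • S i X))
      - ((inner ℝ X q : ℝ) • Y - (inner ℝ Y q : ℝ) • X))
    (by
      intro X X' Y
      beta_reduce
      have h1 : ∀ i : Fin 9, (inner ℝ (S i (X + X')) q : ℝ) • S i Y - (inner ℝ (S i Y) q : ℝ) • S i (X + X')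
          = ((inner ℝ (S i X) q : ℝ) • S i Y - (inner ℝ (S i Y) q : ℝ) • S i X)
            + ((inner ℝ (S i X') q : ℝ) • S i Y - (inner ℝ (S i Y) q : ℝ) • S i X') := by
        intro i; rw [map_add, inner_add_left, add_smul, smul_add]; abel
      rw [Finset.sum_congr rfl (fun i _ => h1 i), Finset.sum_add_distrib, inner_add_left, add_smul,
        smul_add]
      abel)
    (by
      intro c X Y
      beta_reduce
      have h1 : ∀ i : Fin 9, (inner ℝ (S i (c • X)) q : ℝ) • S i Y - (inner ℝ (S i Y) q : ℝ) • S i (c • X)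
          = c • ((inner ℝ (S i X) q : ℝ) • S i Y - (inner ℝ (S i Y) q : ℝ) • S i X) := by
        intro i
        rw [map_smul, real_inner_smul_left, mul_smul, smul_comm (inner ℝ (S i Y) q : ℝ) c, ← smul_sub]
      rw [Finset.sum_congr rfl (fun i _ => h1 i), ← Finset.smul_sum, real_inner_smul_left, mul_smul,
        smul_comm (inner ℝ Y q : ℝ) c, ← smul_sub, ← smul_sub]
      )
    (by
      intro X Y Y'
      beta_reduce
      have h1 : ∀ i : Fin 9, (inner ℝ (S i X) q : ℝ) • S i (Y + Y') - (inner ℝ (S i (Y + Y')) q : ℝ) • S i X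
          = ((inner ℝ (S i X) q : ℝ) • S i Y - (inner ℝ (S i Y) q : ℝ) • S i X)
            + ((inner ℝ (S i X) q : ℝ) • S i Y' - (inner ℝ (S i Y') q : ℝ) • S i X) := by
        intro i; rw [map_add, inner_add_left, add_smul, smul_add]; abel
      rw [Finset.sum_congr rfl (fun i _ => h1 i), Finset.sum_add_distrib, inner_add_left, add_smul,
        smul_add]
      abel)
    (by
      intro c X Y
      beta_reduce
      have h1 : ∀ i : Fin 9, (inner ℝ (S i X) q : ℝ) • S i (c • Y) - (inner ℝ (S i (c • Y)) q : ℝ) • S i X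
          = c • ((inner ℝ (S i X) q : ℝ) • S i Y - (inner ℝ (S i Y) q : ℝ) • S i X) := by
        intro i
        rw [map_smul, real_inner_smul_left, mul_smul, smul_comm (inner ℝ (S i X) q : ℝ) c, ← smul_sub]
      rw [Finset.sum_congr rfl (fun i _ => h1 i), ← Finset.smul_sum, real_inner_smul_left, mul_smul,
        smul_comm (inner ℝ X q : ℝ) c, ← smul_sub, ← smul_sub]
      )

lemma PhiM_apply (X Y : E) : PhiM S q X Y =
    (∑ i, ((inner ℝ (S i X) q : ℝ) • S i Y - (inner ℝ (S i Y) q : ℝ) • S i X))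
      - ((inner ℝ X q : ℝ) • Y - (inner ℝ Y q : ℝ) • X) := rfl

lemma PhiM_skew (X Y : E) : PhiM S q X Y = -(PhiM S q Y X) := by
  rw [PhiM_apply, PhiM_apply]
  have h1 : ∀ i : Fin 9, (inner ℝ (S i X) q : ℝ) • S i Y - (inner ℝ (S i Y) q : ℝ) • S i X
      = -((inner ℝ (S i Y) q : ℝ) • S i X - (inner ℝ (S i X) q : ℝ) • S i Y) := by
    intro i; abel
  rw [Finset.sum_congr rfl (fun i _ => h1 i), Finset.sum_neg_distrib]
  abel

-- contraction of PhiM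
section
include hsq hanti hadj

lemma uuPhi_gen (P : L) : (∑ β, PhiM S q (bE β) (P (bE β)))
    = (∑ l, (S l * P * S l) q) - (∑ l, (S l * LinearMap.adjoint P * S l) q)
      - (P q - LinearMap.adjoint P q) := by
  simp only [PhiM_apply]
  rw [Finset.sum_sub_distrib]
  have hA : (∑ β, ∑ l, ((inner ℝ (S l (bE β)) q : ℝ) • S l (P (bE β))
        - (inner ℝ (S l (P (bE β))) q : ℝ) • S l (bE β)))
      = (∑ l, (S l * P * S l) q) - (∑ l, (S l * LinearMap.adjoint P * S l) q) := by
    rw [Finset.sum_comm, ← Finset.sum_sub_distrib]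
    refine Finset.sum_congr rfl fun l _ => ?_
    rw [Finset.sum_sub_distrib]
    have h1 : ∑ β, (inner ℝ (S l (bE β)) q : ℝ) • S l (P (bE β)) = (S l * P * S l) q := by
      have e : ∀ β : Fin 16, (inner ℝ (S l (bE β)) q : ℝ) • S l (P (bE β))
          = (inner ℝ (S l (bE β)) q : ℝ) • (S l * P) (bE β) := fun β => rfl
      rw [Finset.sum_congr rfl (fun β _ => e β), contr (S l) (S l * P) q, hadj l]
      rfl
    have h2 : ∑ β, (inner ℝ (S l (P (bE β))) q : ℝ) • S l (bE β)
        = (S l * LinearMap.adjoint P * S l) q := by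
      have e : ∀ β : Fin 16, (inner ℝ (S l (P (bE β))) q : ℝ) • S l (bE β)
          = (inner ℝ ((S l * P) (bE β)) q : ℝ) • S l (bE β) := fun β => rfl
      rw [Finset.sum_congr rfl (fun β _ => e β), contr (S l * P) (S l) q]
      have hadj2 : LinearMap.adjoint (S l * P) = LinearMap.adjoint P * S l := by
        rw [← LinearMap.star_eq_adjoint, star_mul, LinearMap.star_eq_adjoint,
          LinearMap.star_eq_adjoint, hadj l]
      rw [hadj2]
      rfl
    rw [h1, h2]
  have hB : (∑ β, ((inner ℝ (bE β) q : ℝ) • P (bE β) - (inner ℝ (P (bE β)) q : ℝ) • bE β))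
      = P q - LinearMap.adjoint P q := by
    rw [Finset.sum_sub_distrib, contr_base P q]
    have e : ∀ β : Fin 16, (inner ℝ (P (bE β)) q : ℝ) • bE β
        = (inner ℝ (P (bE β)) q : ℝ) • (1 : L) (bE β) := fun β => rfl
    rw [Finset.sum_congr rfl (fun β _ => e β), contr P (1 : L) q]
    rfl
  rw [hA, hB]

lemma uuPhi_pair (i j : Fin 9) (hij : i ≠ j) :
    (∑ β, PhiM S q (bE β) ((S i * S j) (bE β))) = (8 : ℝ) • ((S i * S j) q) := by
  rw [uuPhi_gen S hsq hanti hadj q (S i * S j), adj_pair S hsq hanti hadj i j hij]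
  have h1 : (∑ l, (S l * (S i * S j) * S l) q) = (5 : ℝ) • ((S i * S j) q) := by
    rw [← LinearMap.sum_apply, Lambda_pair S hsq hanti i j hij, LinearMap.smul_apply]
  have h2 : (∑ l, (S l * -(S i * S j) * S l) q) = -((5 : ℝ) • ((S i * S j) q)) := by
    have e : ∀ l : Fin 9, (S l * -(S i * S j) * S l) q = -((S l * (S i * S j) * S l) q) := by
      intro l
      rw [mul_neg, neg_mul, LinearMap.neg_apply]
    rw [Finset.sum_congr rfl (fun l _ => e l), Finset.sum_neg_distrib, h1]
  rw [h1, h2, LinearMap.neg_apply]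
  module

lemma uuPhi_triple (i j m : Fin 9) (hij : i ≠ j) (him : i ≠ m) (hjm : j ≠ m) :
    (∑ β, PhiM S q (bE β) ((S i * S j * S m) (bE β))) = (-8 : ℝ) • ((S i * S j * S m) q) := by
  rw [uuPhi_gen S hsq hanti hadj q (S i * S j * S m), adj_triple S hsq hanti hadj i j m hij him hjm]
  have h1 : (∑ l, (S l * (S i * S j * S m) * S l) q) = (-3 : ℝ) • ((S i * S j * S m) q) := by
    rw [← LinearMap.sum_apply, Lambda_triple S hsq hanti i j m hij him hjm, LinearMap.smul_apply]
  have h2 : (∑ l, (S l * -(S i * S j * S m) * S l) q) = -((-3 : ℝ) • ((S i * S j * S m) q)) := by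
    have e : ∀ l : Fin 9, (S l * -(S i * S j * S m) * S l) q = -((S l * (S i * S j * S m) * S l) q) := by
      intro l
      rw [mul_neg, neg_mul, LinearMap.neg_apply]
    rw [Finset.sum_congr rfl (fun l _ => e l), Finset.sum_neg_distrib, h1]
  rw [h1, h2, LinearMap.neg_apply]
  module

end


-- ### Main theorem

theorem main (S : Fin 9 → L)
    (hsymm : ∀ i, LinearMap.adjoint (S i) = S i)
    (hcl : ∀ i j, S i * S j + S j * S i = if i = j then (2 : ℝ) • (1 : L) else 0)
    (N : E →ₗ[ℝ] E →ₗ[ℝ] E)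
    (hNskew : ∀ X Y, N X Y = -N Y X)
    (hN : ∀ w : EuclideanSpace ℝ (Fin 9), w ≠ 0 → ∀ X Y Z : E,
      X ∈ Module.End.eigenspace (∑ i, w i • S i) ‖w‖ →
      Y ∈ Module.End.eigenspace (∑ i, w i • S i) ‖w‖ →
      Z ∈ Module.End.eigenspace (∑ i, w i • S i) ‖w‖ →
      (inner ℝ (N X Y) Z : ℝ) = 0) :
    ∃ q : E, ∀ X Y : E,
      N X Y = (∑ i, ((inner ℝ (S i X) q : ℝ) • S i Y - (inner ℝ (S i Y) q : ℝ) • S i X))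
        - ((inner ℝ X q : ℝ) • Y - (inner ℝ Y q : ℝ) • X) := by
  have hsq : ∀ i, S i * S i = 1 := by
    intro i
    have h := hcl i i
    rw [if_pos rfl, two_smul] at h
    have h2 : (2 : ℝ) • (S i * S i) = (2 : ℝ) • (1 : L) := by
      rw [two_smul, two_smul]
      exact h
    exact smul_right_injective L two_ne_zero h2
  have hanti : ∀ i j, i ≠ j → S i * S j = -(S j * S i) := by
    intro i j hij
    have h := hcl i j
    rw [if_neg hij] at h
    exact eq_neg_of_add_eq_zero_left h
  have hsqv : ∀ (k : Fin 9) (v : E), S k (S k v) = v := by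
    intro k v
    have h := congrArg (fun f : L => f v) (hsq k)
    simpa using h
  have hmove : ∀ (k : Fin 9) (v Z : E), (inner ℝ v (S k Z) : ℝ) = inner ℝ (S k v) Z := by
    intro k v Z
    conv_rhs => rw [← hsymm k]
    rw [LinearMap.adjoint_inner_left]
  -- Step 1 : the basic identity at w = ± e_m
  have hAm : ∀ (m : Fin 9) (X Y Z : E),
      (inner ℝ (N X Y) Z : ℝ) + (inner ℝ (N (S m X) (S m Y)) Z : ℝ)
        + (inner ℝ (N (S m X) Y) (S m Z) : ℝ) + (inner ℝ (N X (S m Y)) (S m Z) : ℝ) = 0 := by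
    intro m X Y Z
    set w : EuclideanSpace ℝ (Fin 9) := EuclideanSpace.single m (1 : ℝ) with hw
    have hwnorm : ‖w‖ = 1 := by
      rw [hw, EuclideanSpace.norm_single]
      norm_num
    have hwne : w ≠ 0 := by
      intro h
      rw [h, norm_zero] at hwnorm
      norm_num at hwnorm
    have hsumw : (∑ i, w i • S i) = S m := by
      rw [hw]
      rw [Finset.sum_eq_single m]
      · simp [EuclideanSpace.single_apply]
      · intro b _ hbm
        simp [EuclideanSpace.single_apply, hbm]
      · intro hm
        exact absurd (Finset.mem_univ m) hm
    have hsumw' : (∑ i, (-w) i • S i) = -(S m) := by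
      have e : ∀ i : Fin 9, (-w) i • S i = -(w i • S i) := by
        intro i
        have h : (-w) i = -(w i) := rfl
        rw [h, neg_smul]
      rw [Finset.sum_congr rfl (fun i _ => e i), Finset.sum_neg_distrib, hsumw]
    have hmem1 : ∀ V : E, (V + S m V) ∈ Module.End.eigenspace (∑ i, w i • S i) ‖w‖ := by
      intro V
      rw [hsumw, hwnorm]
      apply Module.End.mem_eigenspace_iff.mpr
      rw [map_add, one_smul, hsqv m V]
      exact add_comm _ _
    have hmem2 : ∀ V : E, (V - S m V) ∈ Module.End.eigenspace (∑ i, (-w) i • S i) ‖-w‖ := by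
      intro V
      rw [hsumw', norm_neg, hwnorm]
      apply Module.End.mem_eigenspace_iff.mpr
      rw [LinearMap.neg_apply, map_sub, hsqv m V, one_smul, neg_sub]
    have h1 := hN w hwne _ _ _ (hmem1 X) (hmem1 Y) (hmem1 Z)
    have h2 := hN (-w) (neg_ne_zero.mpr hwne) _ _ _ (hmem2 X) (hmem2 Y) (hmem2 Z)
    simp only [map_add, map_sub, LinearMap.add_apply, LinearMap.sub_apply, inner_add_left,
      inner_sub_left, inner_add_right, inner_sub_right] at h1 h2
    linarith
  -- Step 2 : the contracted identity
  have hstar : ∀ (m : Fin 9) (P : L),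
      uu N P + uu N (S m * P * S m) + S m (uu N (P * S m)) + S m (uu N (S m * P)) = 0 := by
    intro m P
    have hZ : ∀ Z : E,
        (inner ℝ (uu N P + uu N (S m * P * S m) + S m (uu N (P * S m)) + S m (uu N (S m * P))) Z : ℝ)
          = 0 := by
      intro Z
      have h0 : ∑ β, ((inner ℝ (N (bE β) (P (bE β))) Z : ℝ)
          + (inner ℝ (N (S m (bE β)) (S m (P (bE β)))) Z : ℝ)
          + (inner ℝ (N (S m (bE β)) (P (bE β))) (S m Z) : ℝ)
          + (inner ℝ (N (bE β) (S m (P (bE β)))) (S m Z) : ℝ)) = 0 :=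
        Finset.sum_eq_zero fun β _ => hAm m (bE β) (P (bE β)) Z
      rw [Finset.sum_add_distrib, Finset.sum_add_distrib, Finset.sum_add_distrib] at h0
      have e1 : ∑ β, (inner ℝ (N (bE β) (P (bE β))) Z : ℝ) = inner ℝ (uu N P) Z := by
        rw [uu, sum_inner]
      have e2 : ∑ β, (inner ℝ (N (S m (bE β)) (S m (P (bE β)))) Z : ℝ)
          = inner ℝ (uu N (S m * P * S m)) Z := by
        rw [← sum_inner]
        congr 1
        have g : (∑ β, N (S m (bE β)) (S m (P (bE β))))
            = ∑ β, N (S m (bE β)) ((S m * P) (bE β)) := rfl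
        rw [g, sumN_swap N (S m) (S m * P), hsymm m]
        rfl
      have e3 : ∑ β, (inner ℝ (N (S m (bE β)) (P (bE β))) (S m Z) : ℝ)
          = inner ℝ (S m (uu N (P * S m))) Z := by
        rw [← sum_inner, ← hmove m]
        congr 1
        rw [sumN_swap N (S m) P, hsymm m]
        rfl
      have e4 : ∑ β, (inner ℝ (N (bE β) (S m (P (bE β)))) (S m Z) : ℝ)
          = inner ℝ (S m (uu N (S m * P))) Z := by
        rw [← sum_inner, ← hmove m]
        rfl
      rw [e1, e2, e3, e4] at h0
      rw [inner_add_left, inner_add_left, inner_add_left]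
      linarith
    exact inner_self_eq_zero.mp (hZ _)
  -- Step 3 : E1
  have hE1 : ∀ a b m : Fin 9, a ≠ b → m ≠ a → m ≠ b →
      uu N (S a * S b * S m) = -(S m (uu N (S a * S b))) := by
    intro a b m hab hma hmb
    have h := hstar m (S a * S b)
    rw [word_conj2 S hsq hanti a b m hma hmb, word_comm2 S hsq hanti a b m hma hmb] at h
    have h5 : (uu N (S a * S b) + S m (uu N (S a * S b * S m)))
        + (uu N (S a * S b) + S m (uu N (S a * S b * S m))) = 0 := by
      calc (uu N (S a * S b) + S m (uu N (S a * S b * S m)))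
            + (uu N (S a * S b) + S m (uu N (S a * S b * S m)))
          = uu N (S a * S b) + uu N (S a * S b)
            + S m (uu N (S a * S b * S m)) + S m (uu N (S a * S b * S m)) := by abel
        _ = 0 := h
    have h2 : uu N (S a * S b) + S m (uu N (S a * S b * S m)) = 0 := by
      have h2s : (2 : ℝ) • (uu N (S a * S b) + S m (uu N (S a * S b * S m))) = 0 := by
        rw [two_smul]
        exact h5
      rcases smul_eq_zero.mp h2s with h | h
      · norm_num at h
      · exact h
    have h6 : S m (uu N (S a * S b * S m)) = -(uu N (S a * S b)) :=
      eq_neg_of_add_eq_zero_right h2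
    have h7 := congrArg (S m) h6
    rw [hsqv m, map_neg] at h7
    exact h7
  -- Step 4 : the chain
  have hQsymm : ∀ i j : Fin 9, i ≠ j →
      (S j * S i) (uu N (S j * S i)) = (S i * S j) (uu N (S i * S j)) := by
    intro i j hij
    rw [hanti j i (Ne.symm hij), uu_neg, LinearMap.neg_apply, map_neg, neg_neg]
  have hQchain : ∀ i j m : Fin 9, i ≠ j → i ≠ m → j ≠ m →
      (S j * S m) (uu N (S j * S m)) = (S i * S j) (uu N (S i * S j)) := by
    intro i j m hij him hjm
    have e1 := hE1 i j m hij (Ne.symm him) (Ne.symm hjm)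
    have e2 := hE1 j m i hjm hij him
    rw [word_cycl3 S hsq hanti i j m hij him] at e2
    have e3 : S i (uu N (S j * S m)) = S m (uu N (S i * S j)) := by
      have h := e1.symm.trans e2
      exact (neg_inj.mp h).symm
    have e4 : uu N (S j * S m) = S i (S m (uu N (S i * S j))) := by
      rw [← e3, hsqv i]
    rw [e4]
    have e5 : (S j * S m) (S i (S m (uu N (S i * S j))))
        = (S j * S m * S i * S m) (uu N (S i * S j)) := rfl
    rw [e5, word_jmim S hsq hanti i j m him, hanti j i (Ne.symm hij), neg_neg]
  set q : E := (-(1/8) : ℝ) • ((S 0 * S 1) (uu N (S 0 * S 1))) with hq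
  have hQall : ∀ i j : Fin 9, i ≠ j →
      (S i * S j) (uu N (S i * S j)) = (S 0 * S 1) (uu N (S 0 * S 1)) := by
    have hQ0 : ∀ j : Fin 9, j ≠ 0 → j ≠ 1 →
        (S 0 * S j) (uu N (S 0 * S j)) = (S 0 * S 1) (uu N (S 0 * S 1)) := by
      intro j hj0 hj1
      rw [hQchain 1 0 j one_ne_zero (Ne.symm hj1) (Ne.symm hj0)]
      exact hQsymm 0 1 (by decide)
    intro i j hij
    by_cases hi0 : i = 0
    · subst hi0
      by_cases hj1 : j = 1
      · subst hj1; rfl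
      · exact hQ0 j (Ne.symm hij) hj1
    · by_cases hj0 : j = 0
      · subst hj0
        by_cases hi1 : i = 1
        · subst hi1
          exact hQsymm 0 1 (by decide)
        · rw [hQchain 1 i 0 (Ne.symm hi1) one_ne_zero hi0]
          exact hQchain 0 1 i (by decide) (Ne.symm hi0) (Ne.symm hi1)
      · rw [hQchain 0 i j (Ne.symm hi0) (Ne.symm hj0) hij]
        by_cases hi1 : i = 1
        · subst hi1; rfl
        · exact hQ0 i hi0 hi1
  have hkeypair : ∀ i j : Fin 9, i ≠ j → uu N (S i * S j) = (8 : ℝ) • ((S i * S j) q) := by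
    intro i j hij
    rw [hq, map_smul, ← hQall i j hij]
    have e : (S i * S j) ((S i * S j) (uu N (S i * S j))) = -(uu N (S i * S j)) := by
      have h : (S i * S j) ((S i * S j) (uu N (S i * S j)))
          = ((S i * S j) * (S i * S j)) (uu N (S i * S j)) := rfl
      rw [h, word_sq2 S hsq hanti i j hij]
      simp
    rw [e, smul_smul]
    norm_num
  have hkeytriple : ∀ i j m : Fin 9, i ≠ j → i ≠ m → j ≠ m →
      uu N (S i * S j * S m) = (-8 : ℝ) • ((S i * S j * S m) q) := by
    intro i j m hij him hjm
    rw [hE1 i j m hij (Ne.symm him) (Ne.symm hjm), hkeypair i j hij, map_smul]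
    have e : S m ((S i * S j) q) = (S i * S j * S m) q := by
      have e2 : S m ((S i * S j) q) = (S m * (S i * S j)) q := rfl
      rw [e2, word_comm2 S hsq hanti i j m (Ne.symm him) (Ne.symm hjm)]
    rw [e, ← neg_smul]
  -- Step 5 : matching with PhiM on the family
  have hmatch : ∀ G : Idx, (∑ β, N (bE β) ((vfam S G) (bE β)))
      = ∑ β, PhiM S q (bE β) ((vfam S G) (bE β)) := by
    intro G
    rcases G with ⟨⟨i, j⟩, hij⟩ | ⟨⟨i, j, m⟩, hijm⟩
    · have hv : vfam S (Sum.inl ⟨(i, j), hij⟩) = S i * S j := by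
        simp [vfam, lst]
      rw [hv]
      have hL : (∑ β, N (bE β) ((S i * S j) (bE β))) = uu N (S i * S j) := rfl
      rw [hL, hkeypair i j (ne_of_lt hij),
        uuPhi_pair S hsq hanti hsymm q i j (ne_of_lt hij)]
    · have hij' : i ≠ j := ne_of_lt hijm.1
      have him' : i ≠ m := ne_of_lt (hijm.1.trans hijm.2)
      have hjm' : j ≠ m := ne_of_lt hijm.2
      have hv : vfam S (Sum.inr ⟨(i, j, m), hijm⟩) = S i * S j * S m := by
        simp [vfam, lst, mul_assoc]
      rw [hv]
      have hL : (∑ β, N (bE β) ((S i * S j * S m) (bE β))) = uu N (S i * S j * S m) := rfl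
      rw [hL, hkeytriple i j m hij' him' hjm',
        uuPhi_triple S hsq hanti hsymm q i j m hij' him' hjm']
  -- Step 6 : conclusion
  refine ⟨q, fun X Y => ?_⟩
  have hZall : ∀ Z : E, (inner ℝ (N X Y - PhiM S q X Y) Z : ℝ) = 0 := by
    intro Z
    set MZ : L := {
      toFun := fun x => ∑ β, (inner ℝ (N x (bE β) - PhiM S q x (bE β)) Z : ℝ) • bE β,
      map_add' := by
        intro x y
        beta_reduce
        have e : ∀ β : Fin 16, (inner ℝ (N (x + y) (bE β) - PhiM S q (x + y) (bE β)) Z : ℝ)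
            = (inner ℝ (N x (bE β) - PhiM S q x (bE β)) Z : ℝ)
              + (inner ℝ (N y (bE β) - PhiM S q y (bE β)) Z : ℝ) := by
          intro β
          rw [map_add, map_add, LinearMap.add_apply, LinearMap.add_apply, add_sub_add_comm,
            inner_add_left]
        rw [Finset.sum_congr rfl (fun β _ => by rw [e β, add_smul]), Finset.sum_add_distrib]
      map_smul' := by
        intro c x
        beta_reduce
        have e : ∀ β : Fin 16, (inner ℝ (N (c • x) (bE β) - PhiM S q (c • x) (bE β)) Z : ℝ)
            = c * (inner ℝ (N x (bE β) - PhiM S q x (bE β)) Z : ℝ) := by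
          intro β
          rw [map_smul, map_smul, LinearMap.smul_apply, LinearMap.smul_apply, ← smul_sub,
            real_inner_smul_left]
        simp only [RingHom.id_apply]
        rw [Finset.sum_congr rfl (fun β _ => by rw [e β, mul_smul]), ← Finset.smul_sum] } with hMZdef
    have hMZ : ∀ x y : E, (inner ℝ (MZ x) y : ℝ) = inner ℝ (N x y - PhiM S q x y) Z := by
      intro x y
      have h1 : (inner ℝ (MZ x) y : ℝ)
          = ∑ β, (inner ℝ (N x (bE β) - PhiM S q x (bE β)) Z : ℝ) * (inner ℝ (bE β) y : ℝ) := by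
        have h0 : MZ x = ∑ β, (inner ℝ (N x (bE β) - PhiM S q x (bE β)) Z : ℝ) • bE β := rfl
        rw [h0, sum_inner]
        exact Finset.sum_congr rfl fun β _ => real_inner_smul_left _ _ _
      have h2 : (inner ℝ (N x y - PhiM S q x y) Z : ℝ)
          = ∑ β, (inner ℝ (bE β) y : ℝ) * (inner ℝ (N x (bE β) - PhiM S q x (bE β)) Z : ℝ) := by
        conv_lhs => rw [← bE.sum_repr' y]
        rw [map_sum, map_sum, ← Finset.sum_sub_distrib, sum_inner]
        refine Finset.sum_congr rfl fun β _ => ?_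
        rw [map_smul, map_smul, ← smul_sub, real_inner_smul_left]
      rw [h1, h2]
      exact Finset.sum_congr rfl fun β _ => mul_comm _ _
    have hMZskew : LinearMap.adjoint MZ = -MZ := by
      have h := (LinearMap.eq_adjoint_iff (-MZ) MZ).mpr ?_
      · exact h.symm
      · intro x y
        have hx : N x y - PhiM S q x y = -(N y x - PhiM S q y x) := by
          rw [hNskew x y, PhiM_skew S q x y]
          abel
        rw [LinearMap.neg_apply, inner_neg_left, hMZ x y, hx, inner_neg_left, neg_neg,
          real_inner_comm (MZ y) x, hMZ y x]
    have hMZtr : ∀ G : Idx, tr16 (LinearMap.adjoint (vfam S G) * MZ) = 0 := by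
      intro G
      unfold tr16
      have e : ∀ β : Fin 16, (inner ℝ ((LinearMap.adjoint (vfam S G) * MZ) (bE β)) (bE β) : ℝ)
          = (inner ℝ (N (bE β) ((vfam S G) (bE β)) - PhiM S q (bE β) ((vfam S G) (bE β))) Z : ℝ) := by
        intro β
        rw [Module.End.mul_apply, LinearMap.adjoint_inner_left, hMZ]
      rw [Finset.sum_congr rfl (fun β _ => e β)]
      have e2 : ∀ β : Fin 16,
          (inner ℝ (N (bE β) ((vfam S G) (bE β)) - PhiM S q (bE β) ((vfam S G) (bE β))) Z : ℝ)
          = (inner ℝ (N (bE β) ((vfam S G) (bE β))) Z : ℝ)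
            - (inner ℝ (PhiM S q (bE β) ((vfam S G) (bE β))) Z : ℝ) :=
        fun β => inner_sub_left _ _ _
      rw [Finset.sum_congr rfl (fun β _ => e2 β), Finset.sum_sub_distrib, ← sum_inner,
        ← sum_inner, hmatch G, sub_self]
    have hMZ0 : MZ = 0 := vanish S hsq hanti hsymm MZ hMZskew hMZtr
    have h := hMZ X Y
    rw [hMZ0] at h
    simpa using h.symm
  have hfin : N X Y - PhiM S q X Y = 0 := inner_self_eq_zero.mp (hZall _)
  have hNP := sub_eq_zero.mp hfin
  rw [hNP, PhiM_apply]

end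
end Stmt13X



/-- Lemma 3(5): if a bilinear skew-symmetric map `N : ℝ¹⁶ × ℝ¹⁶ → ℝ¹⁶` satisfies
`⟨N(X,Y),Z⟩ = 0` whenever `X, Y, Z` all lie in the `‖w‖`-eigenspace of `S_w` for some
nonzero `w ∈ ℝ⁹`, then `N(X,Y) = Σᵢ(⟨SᵢX,q⟩SᵢY − ⟨SᵢY,q⟩SᵢX) − (⟨X,q⟩Y − ⟨Y,q⟩X)`
for some `q ∈ ℝ¹⁶`. -/
theorem stmt13 (S : Fin 9 → (E16 →ₗ[ℝ] E16))
    (hsymm : ∀ i, LinearMap.adjoint (S i) = S i)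
    (hcl : ∀ i j, S i * S j + S j * S i =
      if i = j then (2 : ℝ) • (1 : E16 →ₗ[ℝ] E16) else 0)
    (N : E16 →ₗ[ℝ] E16 →ₗ[ℝ] E16)
    (hNskew : ∀ X Y, N X Y = -N Y X)
    (hN : ∀ w : EuclideanSpace ℝ (Fin 9), w ≠ 0 → ∀ X Y Z : E16,
      X ∈ Module.End.eigenspace (∑ i, w i • S i) ‖w‖ →
      Y ∈ Module.End.eigenspace (∑ i, w i • S i) ‖w‖ →
      Z ∈ Module.End.eigenspace (∑ i, w i • S i) ‖w‖ →
      (inner ℝ (N X Y) Z : ℝ) = 0) :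
    ∃ q : E16, ∀ X Y : E16,
      N X Y = (∑ i, ((inner ℝ (S i X) q : ℝ) • S i Y - (inner ℝ (S i Y) q : ℝ) • S i X))
        - ((inner ℝ X q : ℝ) • Y - (inner ℝ Y q : ℝ) • X) :=
  Stmt13X.main S hsymm hcl N hNskew hN
end

section
/- Let F_0, …, F_8 be homogeneous polynomials of degree 2 in the real polynomial ring ℝ[w_0, …, w_8] such that the polynomial ‖w‖² = w_0² + ··· + w_8² divides w_iF_j − w_jF_i for all i, j ∈ {0, …, 8}. Then there exist a homogeneous linear polynomial Y ∈ ℝ[w_0, …, w_8] and real constants g_0, …, g_8 such that F_i = Y·w_i + g_i·‖w‖² for every i. -/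
open MvPolynomial


section Helpers

variable {σ : Type*} [Fintype σ] [DecidableEq σ] {R : Type*} [CommRing R]

lemma aux_degree_one {d : σ →₀ ℕ} (hd : d.degree = 1) : ∃ m, d = Finsupp.single m 1 := by
  classical
  have hne : d.support.Nonempty := by
    rw [Finset.nonempty_iff_ne_empty]
    intro h
    rw [Finsupp.degree_apply, h] at hd
    simp at hd
  have hcard : d.support.card ≤ 1 := by
    calc d.support.card = ∑ _i ∈ d.support, 1 := by simp
    _ ≤ ∑ i ∈ d.support, d i := by
        apply Finset.sum_le_sum
        intro i hi
        exact Nat.one_le_iff_ne_zero.mpr (Finsupp.mem_support_iff.mp hi)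
    _ = 1 := hd
  obtain ⟨m, hm⟩ := Finset.card_eq_one.mp (le_antisymm hcard hne.card_pos)
  have h2 := (Finsupp.support_eq_singleton.mp hm).2
  have h3 : d m = 1 := by
    rw [Finsupp.degree_apply, hm, Finset.sum_singleton] at hd
    exact hd
  exact ⟨m, by rw [h2, h3]⟩

lemma aux_X_dvd {i : σ} {p : MvPolynomial σ R}
    (h : ∀ d : σ →₀ ℕ, d i = 0 → coeff d p = 0) : X i ∣ p := by
  rw [X_dvd_iff_modMonomial_eq_zero]
  ext d
  rw [coeff_zero]
  by_cases hd : Finsupp.single i 1 ≤ d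
  · rw [coeff_modMonomial_of_le _ hd]
  · rw [coeff_modMonomial_of_not_le _ hd]
    apply h
    by_contra h0
    exact hd (Finsupp.single_le_iff.mpr (Nat.one_le_iff_ne_zero.mpr h0))

lemma aux_coeff_X_mul_ne {s : σ} {d : σ →₀ ℕ} (p : MvPolynomial σ R) (h : d s = 0) :
    coeff d (X s * p) = 0 := by
  classical
  rw [coeff_X_mul']
  simp [Finsupp.mem_support_iff, h]

lemma aux_isHomogeneous_of_mul [IsDomain R] {p r : MvPolynomial σ R} {n m : ℕ}
    (hp : p.IsHomogeneous n) (hp0 : p ≠ 0) (hpr : (p * r).IsHomogeneous (n + m)) :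
    r.IsHomogeneous m := by
  classical
  have hcomp : ∀ e : ℕ, p * homogeneousComponent e r = homogeneousComponent (n + e) (p * r) := by
    intro e
    by_cases he : e ≤ r.totalDegree
    · calc p * homogeneousComponent e r
          = ∑ i ∈ Finset.range (r.totalDegree + 1),
              if e = i then p * homogeneousComponent i r else 0 := by
            rw [Finset.sum_ite_eq (Finset.range (r.totalDegree + 1)) e
              (fun i => p * homogeneousComponent i r), if_pos (Finset.mem_range.mpr (Nat.lt_succ_of_le he))]
        _ = ∑ i ∈ Finset.range (r.totalDegree + 1),
              homogeneousComponent (n + e) (p * homogeneousComponent i r) := by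
            apply Finset.sum_congr rfl
            intro i _
            rw [homogeneousComponent_of_mem ((mem_homogeneousSubmodule _ _).mpr
              (hp.mul (homogeneousComponent_isHomogeneous i r)))]
            by_cases h : e = i
            · rw [if_pos h, if_pos (by rw [h])]
            · rw [if_neg h, if_neg (fun hh => h (Nat.add_left_cancel hh))]
        _ = homogeneousComponent (n + e) (p * r) := by
            rw [← map_sum, ← Finset.mul_sum, sum_homogeneousComponent]
    · rw [homogeneousComponent_eq_zero e r (lt_of_not_ge he), mul_zero]
      -- RHS: component (n+e) of p*r
      symm
      apply homogeneousComponent_eq_zero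
      calc (p*r).totalDegree ≤ p.totalDegree + r.totalDegree := totalDegree_mul _ _
      _ ≤ n + r.totalDegree := by
          have := hp.totalDegree_le
          omega
      _ < n + e := by omega
  have key : ∀ e : ℕ, e ≠ m → homogeneousComponent e r = 0 := by
    intro e he
    have h1 := hcomp e
    rw [homogeneousComponent_of_mem ((mem_homogeneousSubmodule _ _).mpr hpr),
      if_neg (fun hh => he (Nat.add_left_cancel hh))] at h1
    rcases mul_eq_zero.mp h1 with h | h
    · exact absurd h hp0
    · exact h
  rw [← sum_homogeneousComponent r]
  apply IsHomogeneous.sum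
  intro i _
  by_cases h : i = m
  · subst h; exact homogeneousComponent_isHomogeneous i r
  · rw [key i h]; exact isHomogeneous_zero _ _ _

end Helpers

section Helpers2
variable {σ : Type*} [Fintype σ] [DecidableEq σ] {R : Type*} [CommRing R]

lemma aux_eq_sum_of_isHomogeneous_one (p : MvPolynomial σ R) (hp : p.IsHomogeneous 1) :
    p = ∑ m : σ, C (coeff (Finsupp.single m 1) p) * X m := by
  ext d
  rw [coeff_sum]
  by_cases h : ∃ m, d = Finsupp.single m 1
  · obtain ⟨m, rfl⟩ := h
    rw [Finset.sum_eq_single m]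
    · simp [coeff_C_mul, coeff_X']
    · intro b _ hb
      simp only [coeff_C_mul, coeff_X']
      rw [if_neg, mul_zero]
      intro hh
      exact hb (by
        have := Finsupp.single_left_injective (α := σ) (one_ne_zero (α := ℕ))
        exact this hh)
    · intro hm; exact absurd (Finset.mem_univ m) hm
  · have hd : coeff d p = 0 := by
      apply hp.coeff_eq_zero
      intro hdeg
      obtain ⟨m, rfl⟩ := aux_degree_one hdeg
      exact h ⟨m, rfl⟩
    rw [hd]
    symm
    apply Finset.sum_eq_zero
    intro m _
    simp only [coeff_C_mul, coeff_X']
    rw [if_neg, mul_zero]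
    intro hh
    exact h ⟨m, hh.symm⟩

end Helpers2

/-- If `F₀,…,F₈` are quadratic forms in `ℝ[w₀,…,w₈]` such that `‖w‖² = w₀² + ⋯ + w₈²`
divides `wᵢFⱼ − wⱼFᵢ` for all `i, j`, then `Fᵢ = Y·wᵢ + gᵢ·‖w‖²` for a linear form `Y`
and constants `gᵢ`. -/
theorem stmt14 (F : Fin 9 → MvPolynomial (Fin 9) ℝ)
    (hF : ∀ i, (F i).IsHomogeneous 2)
    (hdvd : ∀ i j : Fin 9, (∑ k : Fin 9, (X k : MvPolynomial (Fin 9) ℝ) ^ 2) ∣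
      (X i * F j - X j * F i)) :
    ∃ (Y : MvPolynomial (Fin 9) ℝ) (g : Fin 9 → ℝ), Y.IsHomogeneous 1 ∧
      ∀ i, F i = Y * X i + C (g i) * (∑ k : Fin 9, (X k : MvPolynomial (Fin 9) ℝ) ^ 2) := by
  classical
  set q : MvPolynomial (Fin 9) ℝ := ∑ k : Fin 9, X k ^ 2 with hqdef
  have hqh : q.IsHomogeneous 2 :=
    IsHomogeneous.sum _ _ _ (fun k _ => isHomogeneous_X_pow k 2)
  have hq0 : q ≠ 0 := by
    intro h
    have h1 : coeff (Finsupp.single (0 : Fin 9) 2) q = 1 := by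
      rw [hqdef, coeff_sum]
      rw [Finset.sum_eq_single (0 : Fin 9)]
      · simp [X_pow_eq_monomial, coeff_monomial]
      · intro b _ hb
        rw [X_pow_eq_monomial, coeff_monomial, if_neg]
        intro hh
        exact hb (Finsupp.single_left_injective (two_ne_zero) hh)
      · intro hm; exact absurd (Finset.mem_univ _) hm
    rw [h, coeff_zero] at h1
    exact zero_ne_one h1
  choose L hL using hdvd
  have hLH : ∀ i j, (L i j).IsHomogeneous 1 := by
    intro i j
    apply aux_isHomogeneous_of_mul hqh hq0
    rw [← hL i j]
    exact ((isHomogeneous_X ℝ i).mul (hF j)).sub ((isHomogeneous_X ℝ j).mul (hF i))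
  have cocycle : ∀ i j k : Fin 9, X i * L j k - X j * L i k + X k * L i j = 0 := by
    intro i j k
    have h : q * (X i * L j k - X j * L i k + X k * L i j) = q * 0 := by
      rw [mul_zero]
      linear_combination -(X i * hL j k) + X j * hL i k - X k * hL i j
    exact mul_left_cancel₀ hq0 h
  -- vanishing of off-diagonal coefficients of L 0 j
  have hm0 : ∀ j m : Fin 9, j ≠ 0 → m ≠ 0 → m ≠ j →
      coeff (Finsupp.single m 1) (L 0 j) = 0 := by
    intro j m hj hm0 hmj
    obtain ⟨k, hk⟩ : ∃ k : Fin 9, k ∉ ({0, j, m} : Finset (Fin 9)) := by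
      have hcard : ({0, j, m} : Finset (Fin 9)).card < Fintype.card (Fin 9) := by
        calc ({0, j, m} : Finset (Fin 9)).card
            ≤ ({j, m} : Finset (Fin 9)).card + 1 := Finset.card_insert_le _ _
          _ ≤ (({m} : Finset (Fin 9)).card + 1) + 1 := by
              have := Finset.card_insert_le j ({m} : Finset (Fin 9)); omega
          _ < 9 := by simp
          _ = Fintype.card (Fin 9) := by simp
      by_contra h
      push_neg at h
      rw [Finset.eq_univ_iff_forall.mpr h] at hcard
      simp at hcard
    simp only [Finset.mem_insert, Finset.mem_singleton, not_or] at hk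
    obtain ⟨hk0, hkj, hkm⟩ := hk
    have hc := congrArg (coeff (Finsupp.single k 1 + Finsupp.single m 1)) (cocycle 0 j k)
    simp only [coeff_add, coeff_sub, coeff_zero] at hc
    have e1 : coeff (Finsupp.single k 1 + Finsupp.single m 1) (X 0 * L j k) = 0 :=
      aux_coeff_X_mul_ne _ (by
        simp only [Finsupp.add_apply, Finsupp.single_apply]
        rw [if_neg hk0, if_neg hm0, add_zero])
    have e2 : coeff (Finsupp.single k 1 + Finsupp.single m 1) (X j * L 0 k) = 0 :=
      aux_coeff_X_mul_ne _ (by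
        simp only [Finsupp.add_apply, Finsupp.single_apply]
        rw [if_neg hkj, if_neg hmj, add_zero])
    have e3 : coeff (Finsupp.single k 1 + Finsupp.single m 1) (X k * L 0 j) =
        coeff (Finsupp.single m 1) (L 0 j) := coeff_X_mul _ _ _
    rw [e1, e2, e3] at hc
    linarith
  -- the "diagonal" coefficient is independent of j
  have hcc : ∀ j k : Fin 9, j ≠ 0 → k ≠ 0 → j ≠ k →
      coeff (Finsupp.single j 1) (L 0 j) = coeff (Finsupp.single k 1) (L 0 k) := by
    intro j k hj hk hjk
    have hc := congrArg (coeff (Finsupp.single j 1 + Finsupp.single k 1)) (cocycle 0 j k)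
    simp only [coeff_add, coeff_sub, coeff_zero] at hc
    have e1 : coeff (Finsupp.single j 1 + Finsupp.single k 1) (X 0 * L j k) = 0 :=
      aux_coeff_X_mul_ne _ (by
        simp only [Finsupp.add_apply, Finsupp.single_apply]
        rw [if_neg hj, if_neg hk, add_zero])
    have e2 : coeff (Finsupp.single j 1 + Finsupp.single k 1) (X j * L 0 k) =
        coeff (Finsupp.single k 1) (L 0 k) := coeff_X_mul _ _ _
    have e3 : coeff (Finsupp.single j 1 + Finsupp.single k 1) (X k * L 0 j) =
        coeff (Finsupp.single j 1) (L 0 j) := by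
      rw [add_comm]; exact coeff_X_mul _ _ _
    rw [e1, e2, e3] at hc
    linarith
  set c : ℝ := coeff (Finsupp.single (1 : Fin 9) 1) (L 0 1) with hcdef
  set b : Fin 9 → ℝ := fun j => coeff (Finsupp.single (0 : Fin 9) 1) (L 0 j) with hbdef
  have hstruct : ∀ j : Fin 9, j ≠ 0 → L 0 j = C (b j) * X 0 + C c * X j := by
    intro j hj
    have hcj : coeff (Finsupp.single j 1) (L 0 j) = c := by
      by_cases h1 : j = 1
      · rw [h1, hcdef]
      · rw [hcdef]
        exact hcc j 1 hj (by decide) h1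
    rw [aux_eq_sum_of_isHomogeneous_one (L 0 j) (hLH 0 j)]
    rw [← Finset.sum_subset (Finset.subset_univ ({0, j} : Finset (Fin 9)))
      (by
        intro m _ hm
        simp only [Finset.mem_insert, Finset.mem_singleton, not_or] at hm
        rw [hm0 j m hj hm.1 hm.2, map_zero, zero_mul])]
    rw [Finset.sum_pair (Ne.symm hj), hcj, hbdef]
  have key : ∀ j : Fin 9, j ≠ 0 → X 0 * (F j - C (b j) * q) = X j * (F 0 + C c * q) := by
    intro j hj
    linear_combination hL 0 j + q * hstruct j hj
  have hdvd0 : X (0 : Fin 9) ∣ (F 0 + C c * q) := by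
    apply aux_X_dvd
    intro d hd
    have h := congrArg (coeff (Finsupp.single (1 : Fin 9) 1 + d)) (key 1 (by decide))
    have e1 : coeff (Finsupp.single (1 : Fin 9) 1 + d) (X 0 * (F 1 - C (b 1) * q)) = 0 :=
      aux_coeff_X_mul_ne _ (by simp [Finsupp.single_apply, Finsupp.add_apply, hd])
    have e2 : coeff (Finsupp.single (1 : Fin 9) 1 + d) (X 1 * (F 0 + C c * q)) =
        coeff d (F 0 + C c * q) := coeff_X_mul _ _ _
    rw [e1, e2] at h
    exact h.symm
  obtain ⟨Y, hY⟩ := hdvd0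
  have hX0 : (X (0 : Fin 9) : MvPolynomial (Fin 9) ℝ) ≠ 0 := X_ne_zero 0
  have hGj : ∀ j : Fin 9, j ≠ 0 → F j - C (b j) * q = X j * Y := by
    intro j hj
    apply mul_left_cancel₀ hX0
    rw [key j hj, hY]
    ring
  have hYh : Y.IsHomogeneous 1 := by
    apply aux_isHomogeneous_of_mul (isHomogeneous_X ℝ 0) hX0
    rw [← hY]
    exact (hF 0).add (hqh.C_mul c)
  refine ⟨Y, fun j => if j = 0 then -c else b j, hYh, ?_⟩
  intro i
  by_cases hi : i = 0
  · subst hi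
    have hg0 : (fun j : Fin 9 => if j = 0 then -c else b j) 0 = -c := by simp
    rw [hg0, show (C (-c) : MvPolynomial (Fin 9) ℝ) = -(C c) from map_neg C c]
    linear_combination hY
  · simp only [if_neg hi]
    linear_combination hGj i hi
end

section
/- Let S_0, …, S_8 be a Cl⁺(9)-system on ℝ^16, and let T_0, …, T_8 be symmetric (self-adjoint) endomorphisms of ℝ^16 satisfying T_iS_j + T_jS_i + S_jT_i + S_iT_j = 0 for all i, j ∈ {0, …, 8}. Then there exists a skew-symmetric endomorphism N of ℝ^16 such that T_i = S_iN − NS_i for every i = 0, …, 8. -/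
/-- Lemma 7(1): if symmetric endomorphisms `T₀,…,T₈` of `ℝ¹⁶` satisfy
`TᵢSⱼ + TⱼSᵢ + SⱼTᵢ + SᵢTⱼ = 0` for a `Cl⁺(9)`-system `S₀,…,S₈`, then there is a single
skew-symmetric endomorphism `N` with `Tᵢ = [Sᵢ, N] = SᵢN − NSᵢ` for every `i`. -/
theorem stmt15 (S : Fin 9 → (E16 →ₗ[ℝ] E16))
    (hsymm : ∀ i, LinearMap.adjoint (S i) = S i)
    (hcl : ∀ i j, S i * S j + S j * S i =
      if i = j then (2 : ℝ) • (1 : E16 →ₗ[ℝ] E16) else 0)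
    (T : Fin 9 → (E16 →ₗ[ℝ] E16))
    (hTsymm : ∀ i, LinearMap.adjoint (T i) = T i)
    (hTS : ∀ i j, T i * S j + T j * S i + S j * T i + S i * T j = 0) :
    ∃ N : E16 →ₗ[ℝ] E16, LinearMap.adjoint N = -N ∧ ∀ i, T i = S i * N - N * S i := by
  have hSstar : ∀ i, star (S i) = S i := by
    intro i; rw [LinearMap.star_eq_adjoint]; exact hsymm i
  have hS2 : ∀ i, S i * S i = 1 := by
    intro i
    have h := hcl i i
    rw [if_pos rfl] at h
    have h2 : (2 : ℝ) • (S i * S i) = (2 : ℝ) • (1 : E16 →ₗ[ℝ] E16) := by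
      rw [two_smul]; exact h
    exact smul_right_injective _ (two_ne_zero) h2
  have hanti : ∀ i j : Fin 9, i ≠ j → S i * S j = -(S j * S i) := by
    intro i j hij
    have h := hcl i j
    rw [if_neg hij] at h
    exact eq_neg_of_add_eq_zero_left h
  suffices h : ∀ k : ℕ, k ≤ 9 → ∀ T : Fin 9 → (E16 →ₗ[ℝ] E16),
      (∀ i, star (T i) = T i) →
      (∀ i j, T i * S j + T j * S i + S j * T i + S i * T j = 0) →
      (∀ i : Fin 9, (i : ℕ) < 9 - k → T i = 0) →
      ∃ N : E16 →ₗ[ℝ] E16, star N = -N ∧ ∀ i, T i = S i * N - N * S i by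
    obtain ⟨N, hN1, hN2⟩ := h 9 le_rfl T
      (fun i => by rw [LinearMap.star_eq_adjoint]; exact hTsymm i) hTS
      (fun i hi => absurd hi (by omega))
    exact ⟨N, by rw [← LinearMap.star_eq_adjoint]; exact hN1, hN2⟩
  intro k
  induction k with
  | zero =>
    intro _ T _ _ h0
    refine ⟨0, by simp, fun i => ?_⟩
    rw [h0 i (by omega), mul_zero, zero_mul, sub_zero]
  | succ k ih =>
    intro hk T hTsym hTrel h0
    set m : Fin 9 := ⟨8 - k, by omega⟩ with hm
    -- T m anticommutes with S m
    have hTm : T m * S m + S m * T m = 0 := by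
      have h := hTrel m m
      have h2 : (T m * S m + S m * T m) + (T m * S m + S m * T m) = 0 := by
        calc (T m * S m + S m * T m) + (T m * S m + S m * T m)
            = T m * S m + T m * S m + S m * T m + S m * T m := by abel
          _ = 0 := h
      have h3 : (2 : ℝ) • (T m * S m + S m * T m) = 0 := by
        rw [two_smul]; exact h2
      rcases smul_eq_zero.mp h3 with h4 | h4
      · exact absurd h4 two_ne_zero
      · exact h4
    have hSmTm : S m * T m = -(T m * S m) := eq_neg_of_add_eq_zero_right hTm
    set N1 : E16 →ₗ[ℝ] E16 := (-(1/2) : ℝ) • (T m * S m) with hN1def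
    have hN1star : star N1 = -N1 := by
      rw [hN1def, star_smul, star_mul, hSstar, hTsym m, star_trivial, hSmTm, smul_neg]
    have hcomm_m : S m * N1 - N1 * S m = T m := by
      have e1 : S m * (T m * S m) = -T m := by
        rw [← mul_assoc, hSmTm, neg_mul, mul_assoc, hS2, mul_one]
      have e2 : T m * S m * S m = T m := by rw [mul_assoc, hS2, mul_one]
      rw [hN1def, mul_smul_comm, smul_mul_assoc, ← smul_sub, e1, e2]
      module
    set T' : Fin 9 → (E16 →ₗ[ℝ] E16) := fun i => T i - (S i * N1 - N1 * S i) with hT'def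
    have hT'star : ∀ i, star (T' i) = T' i := by
      intro i
      simp only [hT'def, star_sub, star_mul, hSstar, hN1star, hTsym i]
      rw [neg_mul, mul_neg]
      abel
    have hCrel : ∀ i j : Fin 9, (S i * N1 - N1 * S i) * S j + (S j * N1 - N1 * S j) * S i
        + S j * (S i * N1 - N1 * S i) + S i * (S j * N1 - N1 * S j) = 0 := by
      intro i j
      have key : (S i * N1 - N1 * S i) * S j + (S j * N1 - N1 * S j) * S i
          + S j * (S i * N1 - N1 * S i) + S i * (S j * N1 - N1 * S j)
          = (S i * S j + S j * S i) * N1 - N1 * (S i * S j + S j * S i) := by noncomm_ring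
      rw [key, hcl i j]
      split_ifs
      · simp only [smul_mul_assoc, mul_smul_comm, one_mul, mul_one, sub_self]
      · rw [zero_mul, mul_zero, sub_self]
    have hT'rel : ∀ i j, T' i * S j + T' j * S i + S j * T' i + S i * T' j = 0 := by
      intro i j
      have key : T' i * S j + T' j * S i + S j * T' i + S i * T' j
          = (T i * S j + T j * S i + S j * T i + S i * T j)
            - ((S i * N1 - N1 * S i) * S j + (S j * N1 - N1 * S j) * S i
              + S j * (S i * N1 - N1 * S i) + S i * (S j * N1 - N1 * S j)) := by
        simp only [hT'def]; noncomm_ring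
      rw [key, hTrel i j, hCrel i j, sub_zero]
    have hT'0 : ∀ i : Fin 9, (i : ℕ) < 9 - k → T' i = 0 := by
      intro i hi
      rcases Nat.lt_or_ge (i : ℕ) (8 - k) with hlt | hge
      · -- T i = 0 and N1 commutes with S i
        have hTi : T i = 0 := h0 i (by omega)
        have hne : i ≠ m := by
          intro h; rw [h] at hlt; simp [hm] at hlt
        have h5 : T m * S i + S i * T m = 0 := by
          have h := hTrel i m
          rw [hTi] at h
          simpa using h
        have hSiTm : S i * T m = -(T m * S i) := eq_neg_of_add_eq_zero_right h5
        have hSiSm : S i * S m = -(S m * S i) := hanti i m hne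
        have hc : S i * N1 = N1 * S i := by
          rw [hN1def, mul_smul_comm, smul_mul_assoc]
          congr 1
          calc S i * (T m * S m) = (S i * T m) * S m := by rw [mul_assoc]
            _ = -(T m * S i) * S m := by rw [hSiTm]
            _ = -(T m * (S i * S m)) := by rw [neg_mul, mul_assoc]
            _ = T m * (S m * S i) := by rw [hSiSm, mul_neg, neg_neg]
            _ = T m * S m * S i := by rw [mul_assoc]
        simp only [hT'def, hTi, hc, sub_self, zero_sub, neg_zero]
      · have him : i = m := by
          apply Fin.ext
          simp only [hm]
          omega
        simp only [hT'def, him, hcomm_m, sub_self]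
    obtain ⟨N', hN'star, hN'⟩ := ih (by omega) T' hT'star hT'rel hT'0
    refine ⟨N1 + N', by rw [star_add, hN1star, hN'star, neg_add], fun i => ?_⟩
    have h6 := hN' i
    simp only [hT'def] at h6
    have : T i = (S i * N1 - N1 * S i) + (S i * N' - N' * S i) := by
      rw [← h6]; abel
    rw [this]
    noncomm_ring
end
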